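/- arXiv:2204.00394 — 5 statements merged into one kernel-verified Lean document; each statement's English description precedes it below -/
import Mathlib

section
/- Let G be a countable group, A a finite alphabet, F a set of patterns, and β > 0 a real number satisfying |A| − Σ_{f∈F} |f|·β^{1−|f|} ≥ β. Then for every finite set S ⊆ G and every s ∈ G \ S, the number of locally admissible patterns satisfies |L_F^(S∪{s})| ≥ β·|L_F^(S)|. -/
/-- A pattern over a group `G` with alphabet `A`: a finite support together with
a labeling of the group elements (only the values on the support matter). -/
structure Pattern (G A : Type*) where
  supp : Finset G
  val : G → A

/-- A pattern `f` appears in a configuration `x : G → A` if some translate of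
its support carries the same letters. -/
def appearsIn {G A : Type*} [Group G] (f : Pattern G A) (x : G → A) : Prop :=
  ∃ g : G, ∀ s ∈ f.supp, x (g * s) = f.val s

/-- The subshift `X_F`: configurations avoiding every forbidden pattern. -/
def shiftSpace {G A : Type*} [Group G] (F : Set (Pattern G A)) : Set (G → A) :=
  {x | ∀ f ∈ F, ¬ appearsIn f x}

/-- Globally admissible patterns of support `S`: those appearing in some
configuration of `X_F`. -/
def globallyAdmissible {G A : Type*} [Group G] (F : Set (Pattern G A)) (S : Finset G) :
    Set ({g // g ∈ S} → A) :=
  {q | ∃ x ∈ shiftSpace F, ∃ t : G, ∀ s : {g // g ∈ S}, x (t * s.1) = q s}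

/-- `G_F^(n)`: the minimum over supports of size `n` of the number of globally
admissible patterns with that support. -/
noncomputable def globalComplexity {G A : Type*} [Group G] (F : Set (Pattern G A)) (n : ℕ) : ℕ :=
  sInf {k | ∃ S : Finset G, S.card = n ∧ (globallyAdmissible F S).ncard = k}

/-- Locally admissible patterns of support `S`: patterns in which no translate of a
forbidden pattern occurs inside `S`. -/
def locallyAdmissible {G A : Type*} [Group G] (F : Set (Pattern G A)) (S : Finset G) :
    Set ({g // g ∈ S} → A) :=
  {q | ∀ f ∈ F, ∀ g : G,
    ¬ ∃ h : ∀ s ∈ f.supp, g * s ∈ S, ∀ s, ∀ hs : s ∈ f.supp, q ⟨g * s, h s hs⟩ = f.val s}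


section Aux
variable {G A : Type*} [Group G] [DecidableEq G] [Fintype A]

lemma restrict_mem_locallyAdmissible (F : Set (Pattern G A)) {T S : Finset G} (hTS : T ⊆ S)
    {q : {g // g ∈ S} → A} (hq : q ∈ locallyAdmissible F S) :
    (fun t : {g // g ∈ T} => q ⟨t.1, hTS t.2⟩) ∈ locallyAdmissible F T := by
  intro f hf g hex
  obtain ⟨h, ha⟩ := hex
  exact hq f hf g ⟨fun t ht => hTS (h t ht), fun t ht => ha t ht⟩

def extFun (S : Finset G) (s : G) (c : ({g // g ∈ S} → A) × A) : {g // g ∈ insert s S} → A :=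
  fun x => if hx : x.1 ∈ S then c.1 ⟨x.1, hx⟩ else c.2

lemma extFun_injective {S : Finset G} {s : G} (hs : s ∉ S) :
    Function.Injective (extFun (A := A) S s) := by
  intro c c' h
  have h1 : c.1 = c'.1 := by
    funext x
    have := congrFun h ⟨x.1, Finset.mem_insert_of_mem x.2⟩
    simpa [extFun, dif_pos x.2] using this
  have h2 : c.2 = c'.2 := by
    have := congrFun h ⟨s, Finset.mem_insert_self s S⟩
    simpa [extFun, dif_neg hs] using this
  exact Prod.ext h1 h2

/-- Bad extensions via forbidden pattern `f` placed so that `s` is the image of `t₀`. -/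
def badPart (F : Set (Pattern G A)) (f : Pattern G A) (S : Finset G) (s t₀ : G) :
    Set (({g // g ∈ S} → A) × A) :=
  {c | c.1 ∈ locallyAdmissible F S ∧
    ∃ h : ∀ t ∈ f.supp, s * t₀⁻¹ * t ∈ insert s S,
      ∀ t (ht : t ∈ f.supp), extFun S s c ⟨s * t₀⁻¹ * t, h t ht⟩ = f.val t}

lemma ncard_biUnion_le {α β : Type*} [Finite β] (s : Finset α) (f : α → Set β) :
    (⋃ a ∈ s, f a).ncard ≤ ∑ a ∈ s, (f a).ncard := by
  classical
  induction s using Finset.induction with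
  | empty => simp
  | @insert a s' h ih =>
    rw [Finset.set_biUnion_insert, Finset.sum_insert h]
    exact le_trans (Set.ncard_union_le _ _) (by omega)

lemma badPart_ncard_le (F : Set (Pattern G A)) (f : Pattern G A) {S : Finset G} {s : G}
    (hs : s ∉ S) (t₀ : G) (ht₀ : t₀ ∈ f.supp) :
    (badPart F f S s t₀).ncard ≤
      (locallyAdmissible F (S \ f.supp.image (fun t => s * t₀⁻¹ * t))).ncard := by
  classical
  set W : Finset G := f.supp.image (fun t => s * t₀⁻¹ * t) with hW
  have hTS : S \ W ⊆ S := Finset.sdiff_subset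
  apply Set.ncard_le_ncard_of_injOn
    (fun c => fun t : {g // g ∈ S \ W} => c.1 ⟨t.1, hTS t.2⟩)
  · rintro c ⟨hc1, -⟩
    exact restrict_mem_locallyAdmissible F hTS hc1
  · rintro c ⟨hc1, h, hagr⟩ c' ⟨hc1', h', hagr'⟩ heq
    have key : ∀ x : {g // g ∈ S}, c.1 x = c'.1 x := by
      intro x
      by_cases hxW : x.1 ∈ W
      · obtain ⟨t, ht, hxt⟩ := Finset.mem_image.mp hxW
        have e1 : c.1 x = f.val t := by
          have := hagr t ht
          rw [extFun] at this
          simp only [hxt] at this ⊢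
          rwa [dif_pos x.2] at this
        have e2 : c'.1 x = f.val t := by
          have := hagr' t ht
          rw [extFun] at this
          simp only [hxt] at this ⊢
          rwa [dif_pos x.2] at this
        rw [e1, e2]
      · have hx : x.1 ∈ S \ W := Finset.mem_sdiff.mpr ⟨x.2, hxW⟩
        have := congrFun heq ⟨x.1, hx⟩
        simpa using this
    have h2 : c.2 = c'.2 := by
      have hst₀ : s * t₀⁻¹ * t₀ = s := by group
      have e1 := hagr t₀ ht₀
      have e2 := hagr' t₀ ht₀
      rw [extFun] at e1 e2
      simp only [hst₀] at e1 e2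
      rw [dif_neg hs] at e1 e2
      rw [e1, e2]
    exact Prod.ext (funext key) h2

end Aux

/-- Main counting lemma: if `|A| - ∑_{f∈F} |f|·β^(1-|f|)` is at least `β` then adding one point to
the support multiplies the number of locally admissible patterns by at least `β`. -/
theorem locallyAdmissible_extension {G A : Type*} [Group G] [DecidableEq G] [Countable G] [Fintype A]
    (F : Set (Pattern G A)) (hne : ∀ f ∈ F, f.supp.Nonempty)
    (β : ℝ) (hβ : 0 < β)
    (hsum : Summable fun f : F => (f.1.supp.card : ℝ) * β ^ (1 - (f.1.supp.card : ℤ)))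
    (hcond : (Fintype.card A : ℝ) -
        ∑' f : F, (f.1.supp.card : ℝ) * β ^ (1 - (f.1.supp.card : ℤ)) ≥ β)
    (S : Finset G) (s : G) (hs : s ∉ S) :
    β * ((locallyAdmissible F S).ncard : ℝ)
      ≤ ((locallyAdmissible F (insert s S)).ncard : ℝ) := by
  classical
  suffices H : ∀ n : ℕ, ∀ S : Finset G, S.card = n → ∀ s ∉ S,
      β * ((locallyAdmissible F S).ncard : ℝ)
        ≤ ((locallyAdmissible F (insert s S)).ncard : ℝ) from H S.card S rfl s hs
  intro n
  induction n using Nat.strong_induction_on with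
  | _ n IH =>
  intro S hScard s hs
  -- chain bound from the inductive hypothesis
  have chain : ∀ k : ℕ, ∀ T U : Finset G, T ⊆ U → U.card ≤ n → U.card = T.card + k →
      β ^ k * ((locallyAdmissible F T).ncard : ℝ)
        ≤ ((locallyAdmissible F U).ncard : ℝ) := by
    intro k
    induction k with
    | zero =>
      intro T U hTU _ hcard
      have hTUeq : T = U := Finset.eq_of_subset_of_card_le hTU (by omega)
      subst hTUeq; simp
    | succ k ih =>
      intro T U hTU hUn hcard
      have hne' : (U \ T).Nonempty := by
        rw [← Finset.card_pos, Finset.card_sdiff_of_subset hTU]; omega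
      obtain ⟨t, ht⟩ := hne'
      rw [Finset.mem_sdiff] at ht
      have hTU' : T ⊆ U.erase t := fun x hx =>
        Finset.mem_erase.mpr ⟨fun h => ht.2 (h ▸ hx), hTU hx⟩
      have hcard' : (U.erase t).card = T.card + k := by
        rw [Finset.card_erase_of_mem ht.1]; omega
      have h1 := ih T (U.erase t) hTU' (by omega) hcard'
      have h2 := IH (U.erase t).card (by omega) (U.erase t) rfl t (Finset.notMem_erase t U)
      rw [Finset.insert_erase ht.1] at h2
      calc β ^ (k + 1) * ((locallyAdmissible F T).ncard : ℝ)
          = β * (β ^ k * ((locallyAdmissible F T).ncard : ℝ)) := by ring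
        _ ≤ β * ((locallyAdmissible F (U.erase t)).ncard : ℝ) :=
            mul_le_mul_of_nonneg_left h1 hβ.le
        _ ≤ _ := h2
  -- notation
  set L : Set ({g // g ∈ S} → A) := locallyAdmissible F S with hLdef
  set L' : Set ({g // g ∈ insert s S} → A) := locallyAdmissible F (insert s S) with hL'def
  set C : Set (({g // g ∈ S} → A) × A) := L ×ˢ Set.univ with hCdef
  set Bad : Set (({g // g ∈ S} → A) × A) := {c | c ∈ C ∧ extFun S s c ∉ L'} with hBaddef
  set Good : Set (({g // g ∈ S} → A) × A) := {c | c ∈ C ∧ extFun S s c ∈ L'} with hGooddef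
  -- good extensions inject into L'
  have hGoodle : Good.ncard ≤ L'.ncard :=
    Set.ncard_le_ncard_of_injOn (extFun S s) (fun c hc => hc.2)
      ((extFun_injective hs).injOn)
  -- cardinality of C
  have hCcard : C.ncard = L.ncard * Fintype.card A := by
    rw [← Nat.card_coe_set_eq, Nat.card_congr (Equiv.Set.prod L Set.univ),
      Nat.card_prod, Nat.card_coe_set_eq, Nat.card_coe_set_eq, Set.ncard_univ,
      Nat.card_eq_fintype_card]
  -- splitting
  have hsplit : C.ncard ≤ Good.ncard + Bad.ncard := by
    have hsub : C ⊆ Good ∪ Bad := by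
      intro c hc
      by_cases h : extFun S s c ∈ L'
      · exact Or.inl ⟨hc, h⟩
      · exact Or.inr ⟨hc, h⟩
    exact le_trans (Set.ncard_le_ncard hsub (Set.toFinite _)) (Set.ncard_union_le _ _)
  -- every bad configuration lies in some badPart
  have hBadmem : ∀ c ∈ Bad, ∃ f : F, ∃ t₀, t₀ ∈ f.1.supp ∧ c ∈ badPart F f.1 S s t₀ := by
    rintro c ⟨hcC, hcext⟩
    have hc1 : c.1 ∈ L := hcC.1
    rw [hL'def] at hcext
    simp only [locallyAdmissible, Set.mem_setOf_eq] at hcext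
    push_neg at hcext
    obtain ⟨f, hf, g, h, hagr⟩ := hcext
    by_cases hcase : ∃ t₀ ∈ f.supp, g * t₀ = s
    · obtain ⟨t₀, ht₀, hgt₀⟩ := hcase
      have hgeq : g = s * t₀⁻¹ := by rw [← hgt₀]; group
      subst hgeq
      exact ⟨⟨f, hf⟩, t₀, ht₀, hc1, h, hagr⟩
    · exfalso
      have hin : ∀ t ∈ f.supp, g * t ∈ S := by
        intro t ht
        rcases Finset.mem_insert.mp (h t ht) with h' | h'
        · exact absurd ⟨t, ht, h'⟩ hcase
        · exact h'
      refine hc1 f hf g ⟨hin, fun t ht => ?_⟩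
      have := hagr t ht
      rw [extFun] at this
      rwa [dif_pos (hin t ht)] at this
  -- the bound on each badPart, in ℝ
  have hpart : ∀ f ∈ F, ∀ t₀ ∈ f.supp,
      ((badPart F f S s t₀).ncard : ℝ) ≤ β ^ (1 - (f.supp.card : ℤ)) * (L.ncard : ℝ) := by
    intro f hf t₀ ht₀
    by_cases hbp : (badPart F f S s t₀).Nonempty
    · obtain ⟨c, hc1, h, hagr⟩ := hbp
      set W : Finset G := f.supp.image (fun t => s * t₀⁻¹ * t) with hWdef
      have hWsub : W ⊆ insert s S := by
        intro x hx
        obtain ⟨t, ht, rfl⟩ := Finset.mem_image.mp hx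
        exact h t ht
      have hWcard : W.card = f.supp.card :=
        Finset.card_image_of_injective _ (mul_right_injective (s * t₀⁻¹))
      have hsW : s ∈ W := Finset.mem_image.mpr ⟨t₀, ht₀, by group⟩
      have hSiW : S ∩ W = W.erase s := by
        ext x
        simp only [Finset.mem_inter, Finset.mem_erase]
        constructor
        · rintro ⟨hxS, hxW⟩
          exact ⟨fun hxs => hs (hxs ▸ hxS), hxW⟩
        · rintro ⟨hxs, hxW⟩
          rcases Finset.mem_insert.mp (hWsub hxW) with h' | h'
          · exact absurd h' hxs
          · exact ⟨h', hxW⟩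
      have hki : (S ∩ W).card = f.supp.card - 1 := by
        rw [hSiW, Finset.card_erase_of_mem hsW, hWcard]
      have hfpos : 1 ≤ f.supp.card := Finset.card_pos.mpr (hne f hf)
      have hcards : S.card = (S \ W).card + (f.supp.card - 1) := by
        have := Finset.card_sdiff_add_card_inter S W
        omega
      have hchain := chain (f.supp.card - 1) (S \ W) S Finset.sdiff_subset
        (le_of_eq hScard) hcards
      have hinj : ((badPart F f S s t₀).ncard : ℝ)
          ≤ ((locallyAdmissible F (S \ W)).ncard : ℝ) := by
        exact_mod_cast badPart_ncard_le F f hs t₀ ht₀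
      have hzpow : β ^ (1 - (f.supp.card : ℤ)) = (β ^ (f.supp.card - 1))⁻¹ := by
        have : (1 - (f.supp.card : ℤ)) = -((f.supp.card - 1 : ℕ) : ℤ) := by
          omega
        rw [this, zpow_neg, zpow_natCast]
      rw [hzpow, inv_mul_eq_div, le_div_iff₀ (pow_pos hβ _)]
      calc ((badPart F f S s t₀).ncard : ℝ) * β ^ (f.supp.card - 1)
          ≤ ((locallyAdmissible F (S \ W)).ncard : ℝ) * β ^ (f.supp.card - 1) :=
            mul_le_mul_of_nonneg_right hinj (pow_nonneg hβ.le _)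
        _ = β ^ (f.supp.card - 1) * ((locallyAdmissible F (S \ W)).ncard : ℝ) := mul_comm _ _
        _ ≤ (L.ncard : ℝ) := hchain
    · rw [Set.not_nonempty_iff_eq_empty.mp hbp]
      simp only [Set.ncard_empty, Nat.cast_zero]
      positivity
  -- choose witnesses; cover Bad by finitely many badParts
  have hBadfin : Bad.Finite := Set.toFinite _
  choose wf wt₀ hwt₀ hw using hBadmem
  set F₀ : Finset F := hBadfin.toFinset.attach.image
    (fun c => wf c.1 (hBadfin.mem_toFinset.mp c.2)) with hF₀def
  have hcover : Bad ⊆ ⋃ f ∈ F₀, ⋃ t₀ ∈ (f : F).1.supp, badPart F (f : F).1 S s t₀ := by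
    intro c hc
    have hmemF₀ : wf c hc ∈ F₀ :=
      Finset.mem_image.mpr ⟨⟨c, hBadfin.mem_toFinset.mpr hc⟩, Finset.mem_attach _ _, rfl⟩
    exact Set.mem_biUnion hmemF₀ (Set.mem_biUnion (hwt₀ c hc) (hw c hc))
  have hBadbound : (Bad.ncard : ℝ)
      ≤ ∑ f ∈ F₀, ((f : F).1.supp.card : ℝ) * β ^ (1 - ((f : F).1.supp.card : ℤ))
          * (L.ncard : ℝ) := by
    have step1 : Bad.ncard ≤ ∑ f ∈ F₀, (⋃ t₀ ∈ (f : F).1.supp, badPart F (f : F).1 S s t₀).ncard :=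
      le_trans (Set.ncard_le_ncard hcover (Set.toFinite _)) (ncard_biUnion_le _ _)
    have step2 : ∀ f : F, ((⋃ t₀ ∈ (f : F).1.supp, badPart F (f : F).1 S s t₀).ncard : ℝ)
        ≤ ((f : F).1.supp.card : ℝ) * β ^ (1 - ((f : F).1.supp.card : ℤ)) * (L.ncard : ℝ) := by
      intro f
      calc ((⋃ t₀ ∈ (f : F).1.supp, badPart F (f : F).1 S s t₀).ncard : ℝ)
          ≤ ∑ t₀ ∈ (f : F).1.supp, ((badPart F (f : F).1 S s t₀).ncard : ℝ) := by
            exact_mod_cast ncard_biUnion_le _ _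
        _ ≤ ∑ _t₀ ∈ (f : F).1.supp, β ^ (1 - ((f : F).1.supp.card : ℤ)) * (L.ncard : ℝ) :=
            Finset.sum_le_sum (fun t₀ ht₀ => hpart (f : F).1 f.2 t₀ ht₀)
        _ = ((f : F).1.supp.card : ℝ) * β ^ (1 - ((f : F).1.supp.card : ℤ)) * (L.ncard : ℝ) := by
            rw [Finset.sum_const, nsmul_eq_mul]; ring
    calc (Bad.ncard : ℝ)
        ≤ ∑ f ∈ F₀, ((⋃ t₀ ∈ (f : F).1.supp, badPart F (f : F).1 S s t₀).ncard : ℝ) := by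
          exact_mod_cast step1
      _ ≤ _ := Finset.sum_le_sum (fun f _ => step2 f)
  -- compare the finite sum with the tsum
  have htsum : ∑ f ∈ F₀, ((f : F).1.supp.card : ℝ) * β ^ (1 - ((f : F).1.supp.card : ℤ))
      ≤ ∑' f : F, (f.1.supp.card : ℝ) * β ^ (1 - (f.1.supp.card : ℤ)) :=
    Summable.sum_le_tsum F₀ (fun f _ => mul_nonneg (Nat.cast_nonneg _) (zpow_nonneg hβ.le _)) hsum
  have hBadfinal : (Bad.ncard : ℝ)
      ≤ (∑' f : F, (f.1.supp.card : ℝ) * β ^ (1 - (f.1.supp.card : ℤ))) * (L.ncard : ℝ) := by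
    calc (Bad.ncard : ℝ)
        ≤ ∑ f ∈ F₀, ((f : F).1.supp.card : ℝ) * β ^ (1 - ((f : F).1.supp.card : ℤ))
            * (L.ncard : ℝ) := hBadbound
      _ = (∑ f ∈ F₀, ((f : F).1.supp.card : ℝ) * β ^ (1 - ((f : F).1.supp.card : ℤ)))
            * (L.ncard : ℝ) := by rw [Finset.sum_mul]
      _ ≤ _ := mul_le_mul_of_nonneg_right htsum (Nat.cast_nonneg _)
  -- final arithmetic
  have hLnonneg : (0 : ℝ) ≤ (L.ncard : ℝ) := Nat.cast_nonneg _
  have hfin : (Fintype.card A : ℝ) * (L.ncard : ℝ) ≤ (Good.ncard : ℝ) + (Bad.ncard : ℝ) := by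
    have : (C.ncard : ℝ) ≤ (Good.ncard : ℝ) + (Bad.ncard : ℝ) := by exact_mod_cast hsplit
    calc (Fintype.card A : ℝ) * (L.ncard : ℝ) = (C.ncard : ℝ) := by
          rw [hCcard]; push_cast; ring
      _ ≤ _ := this
  have hG : (Good.ncard : ℝ) ≤ (L'.ncard : ℝ) := by exact_mod_cast hGoodle
  set sigmaF : ℝ := ∑' f : F, (f.1.supp.card : ℝ) * β ^ (1 - (f.1.supp.card : ℤ)) with hsigmadef
  have hmul : ((Fintype.card A : ℝ) - sigmaF - β) * (L.ncard : ℝ) ≥ 0 :=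
    mul_nonneg (by linarith [hcond]) hLnonneg
  nlinarith [hBadfinal, hfin, hG, hmul]
end

section
/- Let G be a countable group, A a finite alphabet, F a set of patterns, and β > 0 with |A| − Σ_{f∈F} |f|·β^{1−|f|} ≥ β. Then for every finite set S ⊆ G, |L_F^(S)| ≥ β^{|S|}; in particular L_F^(S) is nonempty. -/
section Aux
open Finset in
lemma restrict_mem {G A : Type*} [Group G] {F : Set (Pattern G A)} {S T : Finset G} (hTS : T ⊆ S)
    {q : {g // g ∈ S} → A} (hq : q ∈ locallyAdmissible F S) :
    (fun t : {g // g ∈ T} => q ⟨t.1, hTS t.2⟩) ∈ locallyAdmissible F T := by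
  rintro f hf g ⟨h, hm⟩
  exact hq f hf g ⟨fun s hs => hTS (h s hs), fun s hs => hm s hs⟩

lemma prod_ncard {α β : Type*} (s : Set α) (t : Set β) :
    (s ×ˢ t).ncard = s.ncard * t.ncard := by
  rw [← Nat.card_coe_set_eq, ← Nat.card_coe_set_eq, ← Nat.card_coe_set_eq,
    Nat.card_congr (Equiv.Set.prod s t), Nat.card_prod]

lemma sum_term_le {G A : Type*} (F : Set (Pattern G A)) (β : ℝ) (hβ : 0 < β)
    (hsum : Summable fun f : F => (f.1.supp.card : ℝ) * β ^ (1 - (f.1.supp.card : ℤ)))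
    (I : Finset F) :
    ∑ f ∈ I, (f.1.supp.card : ℝ) * β ^ (1 - (f.1.supp.card : ℤ))
      ≤ ∑' f : F, (f.1.supp.card : ℝ) * β ^ (1 - (f.1.supp.card : ℤ)) :=
  Summable.sum_le_tsum I (fun f _ => by positivity) hsum

open Finset in
lemma step_lemma {G A : Type*} [Group G] [DecidableEq G] [Fintype A]
    (F : Set (Pattern G A)) (hne : ∀ f ∈ F, f.supp.Nonempty)
    (β : ℝ) (hβ : 0 < β)
    (hsum : Summable fun f : F => (f.1.supp.card : ℝ) * β ^ (1 - (f.1.supp.card : ℤ)))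
    (hcond : (Fintype.card A : ℝ) -
        ∑' f : F, (f.1.supp.card : ℝ) * β ^ (1 - (f.1.supp.card : ℤ)) ≥ β)
    (S : Finset G) (a : G) (ha : a ∉ S)
    (hchain : ∀ T ⊆ S, β ^ (S.card - T.card) * ((locallyAdmissible F T).ncard : ℝ)
        ≤ ((locallyAdmissible F S).ncard : ℝ)) :
    β * ((locallyAdmissible F S).ncard : ℝ)
      ≤ ((locallyAdmissible F (insert a S)).ncard : ℝ) := by
  classical
  set NS : ℝ := ((locallyAdmissible F S).ncard : ℝ) with hNSdef
  have hNS0 : 0 ≤ NS := Nat.cast_nonneg _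
  set Q : Set ({g // g ∈ insert a S} → A) :=
    {q | (fun s : {g // g ∈ S} => q ⟨s.1, Finset.mem_insert_of_mem s.2⟩)
          ∈ locallyAdmissible F S} with hQdef
  -- Step 1 : card A * NS ≤ Q.ncard
  have key1 : (Fintype.card A : ℝ) * NS ≤ (Q.ncard : ℝ) := by
    set e : A × ({g // g ∈ S} → A) → ({g // g ∈ insert a S} → A) :=
      fun pα x => if h : x.1 ∈ S then pα.2 ⟨x.1, h⟩ else pα.1 with hedef
    have hres : ∀ pα, (fun s : {g // g ∈ S} => e pα ⟨s.1, Finset.mem_insert_of_mem s.2⟩)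
        = pα.2 := by
      intro pα; funext s; simp [hedef, s.2]
    have hinj : Function.Injective e := by
      intro p q hpq
      have h1 : p.1 = q.1 := by
        have := congrFun hpq ⟨a, Finset.mem_insert_self a S⟩
        simpa [hedef, ha] using this
      have h2 : p.2 = q.2 := by
        rw [← hres p, ← hres q, hpq]
      exact Prod.ext h1 h2
    have hmaps : ∀ pα ∈ (Set.univ : Set A) ×ˢ locallyAdmissible F S, e pα ∈ Q := by
      rintro pα ⟨-, hp⟩
      show (fun s : {g // g ∈ S} => e pα ⟨s.1, Finset.mem_insert_of_mem s.2⟩)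
          ∈ locallyAdmissible F S
      rw [hres pα]; exact hp
    have := Set.ncard_le_ncard_of_injOn e hmaps (hinj.injOn) (Set.toFinite _)
    rw [prod_ncard, Set.ncard_univ, Nat.card_eq_fintype_card] at this
    calc (Fintype.card A : ℝ) * NS
        = ((Fintype.card A * (locallyAdmissible F S).ncard : ℕ) : ℝ) := by push_cast; ring
      _ ≤ (Q.ncard : ℝ) := by exact_mod_cast this
  -- Bad set
  set Bad : Set ({g // g ∈ insert a S} → A) := Q \ locallyAdmissible F (insert a S) with hBaddef
  have key2 : (Q.ncard : ℝ) ≤ ((locallyAdmissible F (insert a S)).ncard : ℝ) + (Bad.ncard : ℝ) := by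
    have hsub : Q ⊆ locallyAdmissible F (insert a S) ∪ Bad := by
      intro q hq
      by_cases h : q ∈ locallyAdmissible F (insert a S)
      · exact Or.inl h
      · exact Or.inr ⟨hq, h⟩
    have := (Set.ncard_le_ncard hsub (Set.toFinite _)).trans
      (Set.ncard_union_le _ _)
    exact_mod_cast this
  -- the per-pattern bad sets
  set Bfs : Pattern G A → G → Set ({g // g ∈ insert a S} → A) :=
    fun f s₀ => {q | q ∈ Q ∧ ∃ h : ∀ s ∈ f.supp, a * s₀⁻¹ * s ∈ insert a S,
      ∀ s, ∀ hs : s ∈ f.supp, q ⟨a * s₀⁻¹ * s, h s hs⟩ = f.val s} with hBfsdef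
  have claim2 : ∀ f ∈ F, ∀ s₀ ∈ f.supp,
      ((Bfs f s₀).ncard : ℝ) ≤ β ^ (1 - (f.supp.card : ℤ)) * NS := by
    intro f hf s₀ hs₀
    rcases (Bfs f s₀).eq_empty_or_nonempty with hE | ⟨q₁, hq₁Q, hwit, -⟩
    · rw [hE]; simp; positivity
    set g : G := a * s₀⁻¹ with hgdef
    set gsupp : Finset G := f.supp.image (fun s => g * s) with hgsuppdef
    have hgsub : gsupp ⊆ insert a S := by
      intro x hx
      obtain ⟨s, hs, rfl⟩ := Finset.mem_image.mp hx
      exact hwit s hs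
    have hamem : a ∈ gsupp := Finset.mem_image.mpr ⟨s₀, hs₀, by rw [hgdef]; group⟩
    set T : Finset G := insert a S \ gsupp with hTdef
    have hTS : T ⊆ S := by
      intro x hx
      obtain ⟨hx1, hx2⟩ := Finset.mem_sdiff.mp hx
      rcases Finset.mem_insert.mp hx1 with rfl | h
      · exact absurd hamem hx2
      · exact h
    have hk1 : 1 ≤ f.supp.card := Finset.card_pos.mpr (hne f hf)
    have hgcard : gsupp.card = f.supp.card :=
      Finset.card_image_of_injective _ (mul_right_injective g)
    have hTcard : T.card = S.card + 1 - f.supp.card := by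
      rw [hTdef, Finset.card_sdiff_of_subset hgsub, Finset.card_insert_of_notMem ha, hgcard]
    have hkle : f.supp.card ≤ S.card + 1 := by
      have := Finset.card_le_card hgsub
      rwa [hgcard, Finset.card_insert_of_notMem ha] at this
    have hd : S.card - T.card = f.supp.card - 1 := by omega
    -- injection into locallyAdmissible F T
    have hcard : (Bfs f s₀).ncard ≤ (locallyAdmissible F T).ncard := by
      apply Set.ncard_le_ncard_of_injOn
        (fun q (t : {g // g ∈ T}) => q ⟨t.1, Finset.sdiff_subset t.2⟩)
      · rintro q ⟨hqQ, -⟩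
        exact restrict_mem (F := F) hTS
          (q := fun s : {g // g ∈ S} => q ⟨s.1, Finset.mem_insert_of_mem s.2⟩) hqQ
      · rintro q ⟨-, hwq, hmq⟩ q' ⟨-, hwq', hmq'⟩ hrq
        funext x
        by_cases hx : x.1 ∈ gsupp
        · obtain ⟨s, hs, hgs⟩ := Finset.mem_image.mp hx
          have hxq : q x = f.val s := by
            rw [← hmq s hs]; congr 1; exact Subtype.ext hgs.symm
          have hxq' : q' x = f.val s := by
            rw [← hmq' s hs]; congr 1; exact Subtype.ext hgs.symm
          rw [hxq, hxq']
        · have hxT : x.1 ∈ T := Finset.mem_sdiff.mpr ⟨x.2, hx⟩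
          have := congrFun hrq ⟨x.1, hxT⟩
          simpa using this
    have hchainT := hchain T hTS
    rw [hd] at hchainT
    have hzpow : β ^ (1 - (f.supp.card : ℤ)) = (β ^ (f.supp.card - 1))⁻¹ := by
      rw [← zpow_natCast β (f.supp.card - 1), ← zpow_neg]
      congr 1
      omega
    rw [hzpow]
    have hβpow : (0:ℝ) < β ^ (f.supp.card - 1) := by positivity
    rw [inv_mul_eq_div, le_div_iff₀ hβpow]
    calc ((Bfs f s₀).ncard : ℝ) * β ^ (f.supp.card - 1)
        ≤ ((locallyAdmissible F T).ncard : ℝ) * β ^ (f.supp.card - 1) := by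
          have : ((Bfs f s₀).ncard : ℝ) ≤ ((locallyAdmissible F T).ncard : ℝ) := by
            exact_mod_cast hcard
          exact mul_le_mul_of_nonneg_right this hβpow.le
      _ ≤ NS := by rw [mul_comm]; exact hchainT
  -- Step 3 : Bad.ncard ≤ tsum * NS
  have key3 : (Bad.ncard : ℝ)
      ≤ (∑' f : F, (f.1.supp.card : ℝ) * β ^ (1 - (f.1.supp.card : ℤ))) * NS := by
    have htnonneg : 0 ≤ ∑' f : F, (f.1.supp.card : ℝ) * β ^ (1 - (f.1.supp.card : ℤ)) :=
      tsum_nonneg fun f => by positivity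
    rcases Bad.eq_empty_or_nonempty with hE | ⟨q₀, hq₀⟩
    · rw [hE]; simpa using mul_nonneg htnonneg hNS0
    have hcov : ∀ q ∈ Bad, ∃ f : F, ∃ s₀ ∈ f.1.supp, q ∈ Bfs f.1 s₀ := by
      rintro q ⟨hqQ, hqn⟩
      simp only [locallyAdmissible, Set.mem_setOf_eq, not_forall, not_not] at hqn
      obtain ⟨f, hf, g, h, hm⟩ := hqn
      by_cases hall : ∀ s ∈ f.supp, g * s ∈ S
      · exfalso
        exact hqQ f hf g ⟨hall, fun s hs => hm s hs⟩
      · push_neg at hall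
        obtain ⟨s₀, hs₀, hns⟩ := hall
        have hga : g * s₀ = a := by
          rcases Finset.mem_insert.mp (h s₀ hs₀) with h' | h'
          · exact h'
          · exact absurd h' hns
        have hg : a * s₀⁻¹ = g := by rw [← hga]; group
        refine ⟨⟨f, hf⟩, s₀, hs₀, hqQ, ?_⟩
        rw [hg]
        exact ⟨h, hm⟩
    set BadF := Bad.toFinite.toFinset with hBadF
    set pick : ({g // g ∈ insert a S} → A) → F :=
      fun q => if hq : q ∈ Bad then (hcov q hq).choose else (hcov q₀ hq₀).choose with hpick
    set I : Finset F := BadF.image pick with hI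
    have hIsub : BadF ⊆ I.biUnion (fun f =>
        f.1.supp.biUnion (fun s₀ => (Bfs f.1 s₀).toFinite.toFinset)) := by
      intro q hq
      have hqB : q ∈ Bad := (Set.Finite.mem_toFinset _).mp hq
      have hpq : pick q = (hcov q hqB).choose := dif_pos hqB
      obtain ⟨s₀, hs₀, hmem⟩ := (hcov q hqB).choose_spec
      refine Finset.mem_biUnion.mpr ⟨pick q, Finset.mem_image_of_mem _ hq, ?_⟩
      refine Finset.mem_biUnion.mpr ⟨s₀, by rw [hpq]; exact hs₀, ?_⟩
      rw [Set.Finite.mem_toFinset, hpq]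
      exact hmem
    have hcard1 : Bad.ncard ≤ ∑ f ∈ I, ∑ s₀ ∈ f.1.supp, (Bfs f.1 s₀).ncard := by
      rw [Set.ncard_eq_toFinset_card Bad (Set.toFinite _)]
      calc BadF.card ≤ _ := Finset.card_le_card hIsub
        _ ≤ ∑ f ∈ I, (f.1.supp.biUnion fun s₀ => (Bfs f.1 s₀).toFinite.toFinset).card :=
            Finset.card_biUnion_le
        _ ≤ ∑ f ∈ I, ∑ s₀ ∈ f.1.supp, (Bfs f.1 s₀).ncard := by
            apply Finset.sum_le_sum
            intro f _
            calc _ ≤ ∑ s₀ ∈ f.1.supp, ((Bfs f.1 s₀).toFinite.toFinset).card :=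
                  Finset.card_biUnion_le
              _ = ∑ s₀ ∈ f.1.supp, (Bfs f.1 s₀).ncard := by
                  apply Finset.sum_congr rfl
                  intro s₀ _
                  rw [Set.ncard_eq_toFinset_card _ (Set.toFinite _)]
    calc (Bad.ncard : ℝ)
        ≤ ∑ f ∈ I, ∑ s₀ ∈ f.1.supp, ((Bfs f.1 s₀).ncard : ℝ) := by exact_mod_cast hcard1
      _ ≤ ∑ f ∈ I, ((f.1.supp.card : ℝ) * β ^ (1 - (f.1.supp.card : ℤ)) * NS) := by
          apply Finset.sum_le_sum
          intro f _
          calc ∑ s₀ ∈ f.1.supp, ((Bfs f.1 s₀).ncard : ℝ)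
              ≤ ∑ s₀ ∈ f.1.supp, β ^ (1 - (f.1.supp.card : ℤ)) * NS :=
                Finset.sum_le_sum fun s₀ hs₀ => claim2 f.1 f.2 s₀ hs₀
            _ = (f.1.supp.card : ℝ) * β ^ (1 - (f.1.supp.card : ℤ)) * NS := by
                rw [Finset.sum_const, nsmul_eq_mul]; ring
      _ = (∑ f ∈ I, (f.1.supp.card : ℝ) * β ^ (1 - (f.1.supp.card : ℤ))) * NS := by
          rw [Finset.sum_mul]
      _ ≤ (∑' f : F, (f.1.supp.card : ℝ) * β ^ (1 - (f.1.supp.card : ℤ))) * NS :=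
          mul_le_mul_of_nonneg_right (sum_term_le F β hβ hsum I) hNS0
  -- assemble
  have h4 : β * NS ≤ (Fintype.card A : ℝ) * NS
      - (∑' f : F, (f.1.supp.card : ℝ) * β ^ (1 - (f.1.supp.card : ℤ))) * NS := by
    nlinarith [hcond, hNS0]
  linarith [key1, key2, key3, h4]

end Aux
lemma chain_lemma {G A : Type*} [Group G] [DecidableEq G] (F : Set (Pattern G A)) (β : ℝ) (hβ : 0 < β)
    (S : Finset G)
    (hkey : ∀ (T : Finset G) (b : G), b ∉ T → T.card < S.card →
      β * ((locallyAdmissible F T).ncard : ℝ)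
        ≤ ((locallyAdmissible F (insert b T)).ncard : ℝ)) :
    ∀ T ⊆ S, β ^ (S.card - T.card) * ((locallyAdmissible F T).ncard : ℝ)
      ≤ ((locallyAdmissible F S).ncard : ℝ) := by
  suffices H : ∀ d, ∀ T ⊆ S, S.card - T.card = d →
      β ^ d * ((locallyAdmissible F T).ncard : ℝ) ≤ ((locallyAdmissible F S).ncard : ℝ) by
    intro T hT
    exact H _ T hT rfl
  intro d
  induction d with
  | zero =>
    intro T hT hd
    have hcle := Finset.card_le_card hT
    have : T = S := Finset.eq_of_subset_of_card_le hT (by omega)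
    subst this
    simp
  | succ d ih =>
    intro T hT hd
    have hcle := Finset.card_le_card hT
    have hlt : T.card < S.card := by omega
    obtain ⟨b, hbS, hbT⟩ : ∃ b ∈ S, b ∉ T := by
      by_contra h
      push_neg at h
      have : S ⊆ T := h
      have := Finset.card_le_card this
      omega
    have hT' : insert b T ⊆ S := Finset.insert_subset hbS hT
    have hcard' : S.card - (insert b T).card = d := by
      rw [Finset.card_insert_of_notMem hbT]; omega
    have h1 := hkey T b hbT hlt
    have h2 := ih (insert b T) hT' hcard'
    calc β ^ (d + 1) * ((locallyAdmissible F T).ncard : ℝ)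
        = β ^ d * (β * ((locallyAdmissible F T).ncard : ℝ)) := by ring
      _ ≤ β ^ d * ((locallyAdmissible F (insert b T)).ncard : ℝ) :=
          mul_le_mul_of_nonneg_left h1 (by positivity)
      _ ≤ _ := h2

lemma key_lemma {G A : Type*} [Group G] [DecidableEq G] [Fintype A]
    (F : Set (Pattern G A)) (hne : ∀ f ∈ F, f.supp.Nonempty)
    (β : ℝ) (hβ : 0 < β)
    (hsum : Summable fun f : F => (f.1.supp.card : ℝ) * β ^ (1 - (f.1.supp.card : ℤ)))
    (hcond : (Fintype.card A : ℝ) -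
        ∑' f : F, (f.1.supp.card : ℝ) * β ^ (1 - (f.1.supp.card : ℤ)) ≥ β) :
    ∀ (S : Finset G) (a : G), a ∉ S →
      β * ((locallyAdmissible F S).ncard : ℝ)
        ≤ ((locallyAdmissible F (insert a S)).ncard : ℝ) := by
  suffices H : ∀ n (S : Finset G), S.card = n → ∀ a, a ∉ S →
      β * ((locallyAdmissible F S).ncard : ℝ)
        ≤ ((locallyAdmissible F (insert a S)).ncard : ℝ) by
    intro S a ha
    exact H S.card S rfl a ha
  intro n
  induction n using Nat.strong_induction_on with
  | _ n ih =>
    intro S hn a ha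
    apply step_lemma F hne β hβ hsum hcond S a ha
    apply chain_lemma F β hβ S
    intro T b hbT hTlt
    exact ih T.card (by omega) T rfl b hbT
/-- If `|A| - ∑_{f∈F} |f|·β^{1-|f|} ≥ β` then for every finite support `S` there are at
least `β^|S|` locally admissible patterns; in particular some locally admissible pattern
exists. -/
theorem locallyAdmissible_card_ge {G A : Type*} [Group G] [Countable G] [Fintype A]
    (F : Set (Pattern G A)) (hne : ∀ f ∈ F, f.supp.Nonempty)
    (β : ℝ) (hβ : 0 < β)
    (hsum : Summable fun f : F => (f.1.supp.card : ℝ) * β ^ (1 - (f.1.supp.card : ℤ)))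
    (hcond : (Fintype.card A : ℝ) -
        ∑' f : F, (f.1.supp.card : ℝ) * β ^ (1 - (f.1.supp.card : ℤ)) ≥ β)
    (S : Finset G) :
    β ^ S.card ≤ ((locallyAdmissible F S).ncard : ℝ) ∧ (locallyAdmissible F S).Nonempty := by
  classical
  have hbase : ∀ S : Finset G, β ^ S.card ≤ ((locallyAdmissible F S).ncard : ℝ) := by
    intro S
    induction S using Finset.induction_on with
    | empty =>
      set q₀ : {g // g ∈ (∅ : Finset G)} → A :=
        fun x => absurd x.2 (Finset.notMem_empty x.1) with hq₀
      have hmem : q₀ ∈ locallyAdmissible F (∅ : Finset G) := by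
        rintro f hf g ⟨h, -⟩
        obtain ⟨s, hs⟩ := hne f hf
        exact Finset.notMem_empty _ (h s hs)
      have hpos : 0 < (locallyAdmissible F (∅ : Finset G)).ncard :=
        (Set.ncard_pos (Set.toFinite _)).mpr ⟨q₀, hmem⟩
      have h1 : (1:ℝ) ≤ ((locallyAdmissible F (∅ : Finset G)).ncard : ℝ) := by
        exact_mod_cast hpos
      simpa using h1
    | @insert a s ha ih =>
      rw [Finset.card_insert_of_notMem ha, pow_succ]
      calc β ^ s.card * β = β * β ^ s.card := by ring
        _ ≤ β * ((locallyAdmissible F s).ncard : ℝ) :=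
            mul_le_mul_of_nonneg_left ih hβ.le
        _ ≤ _ := key_lemma F hne β hβ hsum hcond s a ha
  refine ⟨hbase S, ?_⟩
  have hpos : (0:ℝ) < ((locallyAdmissible F S).ncard : ℝ) :=
    lt_of_lt_of_le (by positivity) (hbase S)
  have : 0 < (locallyAdmissible F S).ncard := by exact_mod_cast hpos
  exact (Set.ncard_pos (Set.toFinite _)).mp this
end

section
/- Let G be a countable group, A a finite alphabet, and F a set of patterns such that there exists β > 0 with |A| − Σ_{f∈F} |f|·β^{1−|f|} ≥ β. Then the subshift X_F of configurations G → A avoiding all patterns of F is nonempty. -/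
set_option linter.unusedSectionVars false

section Aux

variable {G A : Type*} [Group G] [Fintype A]

/-- Local admissibility on a finite window `S`. -/
def XIsLA (F : Set (Pattern G A)) (S : Finset G) (q : G → A) : Prop :=
  ∀ f ∈ F, ∀ t : G, (∀ s ∈ f.supp, t * s ∈ S) → ∃ s ∈ f.supp, q (t * s) ≠ f.val s

theorem XIsLA.congr {F : Set (Pattern G A)} {S : Finset G} {q q' : G → A}
    (h : XIsLA F S q) (hqq : ∀ s ∈ S, q s = q' s) : XIsLA F S q' := by
  intro f hf t ht
  obtain ⟨s, hs, hne⟩ := h f hf t ht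
  exact ⟨s, hs, by rw [← hqq _ (ht s hs)]; exact hne⟩

theorem XIsLA.mono {F : Set (Pattern G A)} {S T : Finset G} (hST : S ⊆ T) {q : G → A}
    (h : XIsLA F T q) : XIsLA F S q :=
  fun f hf t ht => h f hf t (fun s hs => hST (ht s hs))

/-- Locally admissible configurations with default value `a₀` outside `S`. -/
def XLA (F : Set (Pattern G A)) (a₀ : A) (S : Finset G) : Set (G → A) :=
  {q | XIsLA F S q ∧ ∀ h ∉ S, q h = a₀}

theorem box_finite (a₀ : A) (S : Finset G) : {q : G → A | ∀ h ∉ S, q h = a₀}.Finite := by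
  have hinj : Function.Injective
      (fun (q : {q : G → A // ∀ h ∉ S, q h = a₀}) (s : {x // x ∈ S}) => q.1 s.1) := by
    intro q q' h
    ext x
    by_cases hx : x ∈ S
    · exact congrFun h ⟨x, hx⟩
    · rw [q.2 x hx, q'.2 x hx]
  have : Finite {q : G → A // ∀ h ∉ S, q h = a₀} := Finite.of_injective _ hinj
  exact Set.finite_coe_iff.mp this

theorem XLA_finite (F : Set (Pattern G A)) (a₀ : A) (S : Finset G) : (XLA F a₀ S).Finite :=
  (box_finite a₀ S).subset (fun _ hq => hq.2)

end Aux

set_option linter.unusedSectionVars false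

section Key

variable {G A : Type*} [Group G] [Fintype A] [DecidableEq G]

theorem key_step (F : Set (Pattern G A)) (hne : ∀ f ∈ F, f.supp.Nonempty) (a₀ : A)
    (β : ℝ) (hβ : 0 < β)
    (hsum : Summable fun f : F => (f.1.supp.card : ℝ) * β ^ (1 - (f.1.supp.card : ℤ)))
    (hcond : (Fintype.card A : ℝ) -
        ∑' f : F, (f.1.supp.card : ℝ) * β ^ (1 - (f.1.supp.card : ℤ)) ≥ β) :
    ∀ n : ℕ, ∀ S : Finset G, S.card = n → ∀ g ∉ S,
      β * ((XLA F a₀ S).ncard : ℝ) ≤ ((XLA F a₀ (insert g S)).ncard : ℝ) := by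
  classical
  intro n
  induction n using Nat.strong_induction_on with
  | _ n IH =>
  intro S hcard g hg
  -- the chain lemma: removing elements loses at most a factor β each
  have chain : ∀ D T : Finset G, Disjoint T D → (T ∪ D).card ≤ n →
      β ^ D.card * ((XLA F a₀ T).ncard : ℝ) ≤ ((XLA F a₀ (T ∪ D)).ncard : ℝ) := by
    intro D
    induction D using Finset.induction_on with
    | empty => intro T _ _; simp
    | @insert d D hd ih =>
      intro T hdisj hcard'
      have hdT : d ∉ T := fun h =>
        (Finset.disjoint_right.mp hdisj (Finset.mem_insert_self d D)) h
      have hdisj' : Disjoint T D := hdisj.mono_right (Finset.subset_insert d D)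
      have hU : T ∪ insert d D = insert d (T ∪ D) := by
        ext x; simp [Finset.mem_insert, Finset.mem_union]
      have hdU : d ∉ T ∪ D := by simp [hdT, hd]
      have hcU : (T ∪ D).card < n := by
        rw [hU, Finset.card_insert_of_notMem hdU] at hcard'; omega
      have h1 := ih T hdisj' hcU.le
      have h2 := IH (T ∪ D).card hcU (T ∪ D) rfl d hdU
      have hnn : (0:ℝ) ≤ β := hβ.le
      calc β ^ (insert d D).card * ((XLA F a₀ T).ncard : ℝ)
          = β * (β ^ D.card * ((XLA F a₀ T).ncard : ℝ)) := by
            rw [Finset.card_insert_of_notMem hd]; ring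
        _ ≤ β * ((XLA F a₀ (T ∪ D)).ncard : ℝ) := by
            exact mul_le_mul_of_nonneg_left h1 hnn
        _ ≤ ((XLA F a₀ (insert d (T ∪ D))).ncard : ℝ) := h2
        _ = ((XLA F a₀ (T ∪ insert d D)).ncard : ℝ) := by rw [hU]
  set S' : Finset G := insert g S with hS'
  have hgS' : g ∈ S' := Finset.mem_insert_self g S
  set Q : Set (G → A) := {q | XIsLA F S q ∧ ∀ h ∉ S', q h = a₀} with hQdef
  have hQfin : Q.Finite := (box_finite a₀ S').subset (fun _ hq => hq.2)
  set Bset : Set (G → A) := {q | q ∈ Q ∧ ¬ XIsLA F S' q} with hBdef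
  have hBQ : Bset ⊆ Q := fun q hq => hq.1
  have hBfin : Bset.Finite := hQfin.subset hBQ
  have hsub : XLA F a₀ S' = Q \ Bset := by
    ext q
    constructor
    · rintro ⟨hLA, hdef⟩
      have hQm : q ∈ Q := ⟨hLA.mono (Finset.subset_insert g S), hdef⟩
      exact ⟨hQm, fun hB => hB.2 hLA⟩
    · rintro ⟨⟨hS, hdef⟩, hnB⟩
      refine ⟨?_, hdef⟩
      by_contra hn
      exact hnB ⟨⟨hS, hdef⟩, hn⟩
  have hcount : (XLA F a₀ S').ncard + Bset.ncard = Q.ncard := by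
    rw [hsub]; exact Set.ncard_diff_add_ncard_of_subset hBQ hQfin
  -- |Q| = |A| * N S
  have mem1 : ∀ q ∈ Q, Function.update q g a₀ ∈ XLA F a₀ S := by
    rintro q ⟨hLA, hdef⟩
    refine ⟨hLA.congr (fun s hs => ?_), fun h hh => ?_⟩
    · exact (Function.update_of_ne (by rintro rfl; exact hg hs) _ _).symm
    · by_cases hhg : h = g
      · subst hhg; exact Function.update_self _ _ _
      · rw [Function.update_of_ne hhg]
        exact hdef h (by simp [hS', hh, hhg])
  have mem2 : ∀ (a : A), ∀ q ∈ XLA F a₀ S, Function.update q g a ∈ Q := by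
    rintro a q ⟨hLA, hdef⟩
    refine ⟨hLA.congr (fun s hs => ?_), fun h hh => ?_⟩
    · exact (Function.update_of_ne (by rintro rfl; exact hg hs) _ _).symm
    · have hhg : h ≠ g := fun he => hh (he ▸ hgS')
      have hhS : h ∉ S := fun he => hh (Finset.mem_insert_of_mem he)
      rw [Function.update_of_ne hhg]
      exact hdef h hhS
  have e : Q ≃ A × (XLA F a₀ S : Set (G → A)) :=
    { toFun := fun q => (q.1 g, ⟨Function.update q.1 g a₀, mem1 q.1 q.2⟩)
      invFun := fun p => ⟨Function.update p.2.1 g p.1, mem2 p.1 p.2.1 p.2.2⟩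
      left_inv := fun q => Subtype.ext (by
        show Function.update (Function.update (q : G → A) g a₀) g ((q : G → A) g) = (q : G → A)
        rw [Function.update_idem, Function.update_eq_self])
      right_inv := fun p => by
        refine Prod.ext ?_ (Subtype.ext ?_)
        · exact Function.update_self _ _ _
        · show Function.update (Function.update (p.2 : G → A) g p.1) g a₀ = (p.2 : G → A)
          rw [Function.update_idem]
          funext h
          by_cases hh : h = g
          · subst hh; rw [Function.update_self]; exact (p.2.2.2 h hg).symm
          · rw [Function.update_of_ne hh] }
  have hQcard : (Q.ncard : ℝ) = (Fintype.card A : ℝ) * ((XLA F a₀ S).ncard : ℝ) := by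
    have : Q.ncard = Fintype.card A * (XLA F a₀ S).ncard := by
      rw [← Nat.card_coe_set_eq, Nat.card_congr e, Nat.card_prod,
        Nat.card_eq_fintype_card, Nat.card_coe_set_eq]
    rw [this]; push_cast; ring
  -- choose a violating pattern for each bad configuration
  have key : ∀ q : ↥Bset, ∃ p : ↥F × G, p.2 ∈ p.1.1.supp ∧
      (∀ s ∈ p.1.1.supp, g * p.2⁻¹ * s ∈ S') ∧
      (∀ s ∈ p.1.1.supp, q.1 (g * p.2⁻¹ * s) = p.1.1.val s) := by
    rintro ⟨q, ⟨hQS, hdef⟩, hnot⟩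
    simp only [XIsLA] at hnot
    push_neg at hnot
    obtain ⟨f, hf, t, ht, hmatch⟩ := hnot
    have hs0 : ∃ s₀ ∈ f.supp, t * s₀ = g := by
      by_contra hno
      push_neg at hno
      obtain ⟨s, hs, hne'⟩ := hQS f hf t (fun s hs => by
        rcases Finset.mem_insert.mp (ht s hs) with h | h
        · exact absurd h (hno s hs)
        · exact h)
      exact hne' (hmatch s hs)
    obtain ⟨s₀, hs₀, hts₀⟩ := hs0
    have htg : t = g * s₀⁻¹ := by rw [← hts₀, mul_inv_cancel_right]
    exact ⟨(⟨f, hf⟩, s₀), hs₀, by rw [← htg]; exact ht, by rw [← htg]; exact hmatch⟩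
  haveI := hBfin.to_subtype
  choose c hc1 hc2 hc3 using key
  have hrange : (Set.range c).Finite := Set.finite_range c
  set P : Finset (↥F × G) := hrange.toFinset with hPdef
  have hPprop : ∀ p ∈ P, p.2 ∈ p.1.1.supp ∧ (∀ s ∈ p.1.1.supp, g * p.2⁻¹ * s ∈ S') := by
    intro p hp
    rw [hPdef, Set.Finite.mem_toFinset] at hp
    obtain ⟨qb, rfl⟩ := hp
    exact ⟨hc1 qb, hc2 qb⟩
  set Bad : ↥F × G → Set (G → A) := fun p =>
    {q | q ∈ Q ∧ ∀ s ∈ p.1.1.supp, q (g * p.2⁻¹ * s) = p.1.1.val s} with hBaddef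
  have hBadfin : ∀ p, (Bad p).Finite := fun p => hQfin.subset (fun q hq => hq.1)
  have hcover : Bset ⊆ ⋃ p ∈ P, Bad p := by
    intro q hq
    exact Set.mem_biUnion ((Set.Finite.mem_toFinset hrange).mpr (Set.mem_range_self _))
      (⟨hq.1, hc3 ⟨q, hq⟩⟩ : q ∈ Bad (c ⟨q, hq⟩))
  have hsubadd : ∀ P' : Finset (↥F × G),
      (((⋃ p ∈ P', Bad p).ncard : ℕ) : ℝ) ≤ ∑ p ∈ P', ((Bad p).ncard : ℝ) := by
    intro P'
    induction P' using Finset.induction_on with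
    | empty => simp
    | @insert p P' hp ih =>
      rw [Finset.set_biUnion_insert, Finset.sum_insert hp]
      calc (((Bad p ∪ ⋃ x ∈ P', Bad x).ncard : ℕ) : ℝ)
          ≤ (((Bad p).ncard + (⋃ x ∈ P', Bad x).ncard : ℕ) : ℝ) := by
            exact_mod_cast Set.ncard_union_le _ _
        _ ≤ _ := by push_cast; linarith
  have hBcard : (Bset.ncard : ℝ) ≤ ∑ p ∈ P, ((Bad p).ncard : ℝ) := by
    have h1 : Bset.ncard ≤ (⋃ p ∈ P, Bad p).ncard :=
      Set.ncard_le_ncard hcover (P.finite_toSet.biUnion (fun p _ => hBadfin p))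
    calc (Bset.ncard : ℝ) ≤ (((⋃ p ∈ P, Bad p).ncard : ℕ) : ℝ) := by exact_mod_cast h1
      _ ≤ _ := hsubadd P
  -- the bound for a single bad event
  have hpb : ∀ p ∈ P, ((Bad p).ncard : ℝ) ≤
      β ^ (1 - (p.1.1.supp.card : ℤ)) * ((XLA F a₀ S).ncard : ℝ) := by
    intro p hp
    obtain ⟨hs₀, hin⟩ := hPprop p hp
    set D₀ : Finset G := p.1.1.supp.image (fun s => g * p.2⁻¹ * s) with hD₀
    have hgD₀ : g ∈ D₀ := Finset.mem_image.mpr ⟨p.2, hs₀, by rw [inv_mul_cancel_right]⟩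
    set D : Finset G := D₀.erase g with hD
    have hDS : D ⊆ S := by
      intro x hx
      obtain ⟨hxg, hxD₀⟩ := Finset.mem_erase.mp hx
      obtain ⟨s, hs, rfl⟩ := Finset.mem_image.mp hxD₀
      rcases Finset.mem_insert.mp (hin s hs) with h | h
      · exact absurd h hxg
      · exact h
    set T : Finset G := S \ D₀ with hT
    have hTD : T = S \ D := by
      ext x
      simp only [hT, hD, Finset.mem_sdiff, Finset.mem_erase]
      constructor
      · rintro ⟨hxS, hx⟩; exact ⟨hxS, fun h => hx h.2⟩
      · rintro ⟨hxS, hx⟩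
        refine ⟨hxS, fun h => hx ⟨fun he => hg (he ▸ hxS), h⟩⟩
    have hTS : T ⊆ S := Finset.sdiff_subset
    have hunion : T ∪ D = S := by rw [hTD]; exact Finset.sdiff_union_of_subset hDS
    have hdisjTD : Disjoint T D := by rw [hTD]; exact Finset.sdiff_disjoint
    have hchain := chain D T hdisjTD (by rw [hunion, hcard])
    rw [hunion] at hchain
    have hinj : (Bad p).ncard ≤ (XLA F a₀ T).ncard := by
      refine Set.ncard_le_ncard_of_injOn
        (fun q h => if h ∈ D₀ then a₀ else q h) ?_ ?_ (XLA_finite F a₀ T)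
      · rintro q ⟨⟨hLA, hdef⟩, hmatch⟩
        refine ⟨(hLA.mono hTS).congr (fun s hs => ?_), fun h hh => ?_⟩
        · have hsD : s ∉ D₀ := (Finset.mem_sdiff.mp hs).2
          simp [hsD]
        · by_cases hhD : h ∈ D₀
          · simp [hhD]
          · have hhS : h ∉ S := fun hhS' => hh (Finset.mem_sdiff.mpr ⟨hhS', hhD⟩)
            have hhg : h ≠ g := fun he => hhD (he ▸ hgD₀)
            simp only [hhD, if_false]
            exact hdef h (by simp [hS', hhS, hhg])
      · rintro q ⟨hq, hqm⟩ q' ⟨hq', hqm'⟩ hEq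
        funext h
        by_cases hhD : h ∈ D₀
        · obtain ⟨s, hs, rfl⟩ := Finset.mem_image.mp hhD
          rw [hqm s hs, hqm' s hs]
        · have := congrFun hEq h
          simpa [hhD] using this
    have hcge : 1 ≤ p.1.1.supp.card := Finset.card_pos.mpr ⟨p.2, hs₀⟩
    have hDcard : D.card = p.1.1.supp.card - 1 := by
      rw [hD, Finset.card_erase_of_mem hgD₀, hD₀,
        Finset.card_image_of_injective _ (mul_right_injective (g * p.2⁻¹))]
    have hzp : (0:ℝ) < β ^ (1 - (p.1.1.supp.card : ℤ)) := zpow_pos hβ _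
    have hpow : β ^ (1 - (p.1.1.supp.card : ℤ)) * β ^ (D.card) = 1 := by
      rw [hDcard, ← zpow_natCast β (p.1.1.supp.card - 1), ← zpow_add₀ hβ.ne']
      have hexp : (1 - (p.1.1.supp.card : ℤ)) + ((p.1.1.supp.card - 1 : ℕ) : ℤ) = 0 := by
        omega
      rw [hexp, zpow_zero]
    calc ((Bad p).ncard : ℝ) ≤ ((XLA F a₀ T).ncard : ℝ) := by exact_mod_cast hinj
      _ = β ^ (1 - (p.1.1.supp.card : ℤ)) * (β ^ D.card * ((XLA F a₀ T).ncard : ℝ)) := by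
          rw [← mul_assoc, hpow, one_mul]
      _ ≤ β ^ (1 - (p.1.1.supp.card : ℤ)) * ((XLA F a₀ S).ncard : ℝ) :=
          mul_le_mul_of_nonneg_left hchain hzp.le
  -- sum the bounds
  have hNS0 : (0:ℝ) ≤ ((XLA F a₀ S).ncard : ℝ) := Nat.cast_nonneg _
  set F₁ : Finset ↥F := P.image Prod.fst with hF₁
  have hPsub : P ⊆ F₁.biUnion (fun f => {f} ×ˢ f.1.supp) := by
    intro p hp
    rw [Finset.mem_biUnion]
    exact ⟨p.1, Finset.mem_image_of_mem _ hp,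
      Finset.mem_product.mpr ⟨Finset.mem_singleton_self _, (hPprop p hp).1⟩⟩
  have hsum1 : ∑ p ∈ P, β ^ (1 - (p.1.1.supp.card : ℤ))
      ≤ ∑ f ∈ F₁, (f.1.supp.card : ℝ) * β ^ (1 - (f.1.supp.card : ℤ)) := by
    calc ∑ p ∈ P, β ^ (1 - (p.1.1.supp.card : ℤ))
        ≤ ∑ p ∈ F₁.biUnion (fun f => {f} ×ˢ f.1.supp), β ^ (1 - (p.1.1.supp.card : ℤ)) :=
          Finset.sum_le_sum_of_subset_of_nonneg hPsub (fun p _ _ => (zpow_pos hβ _).le)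
      _ = ∑ f ∈ F₁, ∑ p ∈ ({f} ×ˢ f.1.supp), β ^ (1 - (p.1.1.supp.card : ℤ)) := by
          refine Finset.sum_biUnion ?_
          intro f _ f' _ hff
          refine Finset.disjoint_left.mpr ?_
          rintro p hp hp'
          exact hff ((Finset.mem_singleton.mp (Finset.mem_product.mp hp).1).symm.trans
            (Finset.mem_singleton.mp (Finset.mem_product.mp hp').1))
      _ = ∑ f ∈ F₁, (f.1.supp.card : ℝ) * β ^ (1 - (f.1.supp.card : ℤ)) := by
          refine Finset.sum_congr rfl (fun f _ => ?_)
          have hconst : ∀ p ∈ ({f} ×ˢ f.1.supp), β ^ (1 - (p.1.1.supp.card : ℤ))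
              = β ^ (1 - (f.1.supp.card : ℤ)) := by
            intro p hp
            rw [Finset.mem_singleton.mp (Finset.mem_product.mp hp).1]
          rw [Finset.sum_congr rfl hconst, Finset.sum_const, Finset.card_product,
            Finset.card_singleton, one_mul, nsmul_eq_mul]
  have hB2 : (Bset.ncard : ℝ) ≤
      (∑' f : ↥F, (f.1.supp.card : ℝ) * β ^ (1 - (f.1.supp.card : ℤ)))
        * ((XLA F a₀ S).ncard : ℝ) := by
    have h2 : ∑ f ∈ F₁, (f.1.supp.card : ℝ) * β ^ (1 - (f.1.supp.card : ℤ))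
        ≤ ∑' f : ↥F, (f.1.supp.card : ℝ) * β ^ (1 - (f.1.supp.card : ℤ)) :=
      hsum.sum_le_tsum F₁ (fun f _ => mul_nonneg (Nat.cast_nonneg _) (zpow_pos hβ _).le)
    calc (Bset.ncard : ℝ) ≤ ∑ p ∈ P, ((Bad p).ncard : ℝ) := hBcard
      _ ≤ (∑ p ∈ P, β ^ (1 - (p.1.1.supp.card : ℤ))) * ((XLA F a₀ S).ncard : ℝ) := by
          rw [Finset.sum_mul]; exact Finset.sum_le_sum hpb
      _ ≤ (∑ f ∈ F₁, (f.1.supp.card : ℝ) * β ^ (1 - (f.1.supp.card : ℤ)))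
            * ((XLA F a₀ S).ncard : ℝ) := mul_le_mul_of_nonneg_right hsum1 hNS0
      _ ≤ _ := mul_le_mul_of_nonneg_right h2 hNS0
  have hfinal := mul_le_mul_of_nonneg_right (le_of_sub_nonneg (by linarith [hcond])) hNS0
  have hcountR : ((XLA F a₀ S').ncard : ℝ) + (Bset.ncard : ℝ) = (Q.ncard : ℝ) := by
    exact_mod_cast congrArg (Nat.cast : ℕ → ℝ) hcount
  nlinarith [hB2, hQcard, hcountR, hNS0,
    mul_le_mul_of_nonneg_right
      (show β ≤ (Fintype.card A : ℝ)
          - ∑' f : ↥F, (f.1.supp.card : ℝ) * β ^ (1 - (f.1.supp.card : ℤ)) from hcond) hNS0]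

end Key

section Pos

variable {G A : Type*} [Group G] [Fintype A] [DecidableEq G]

theorem XLA_nonempty (F : Set (Pattern G A)) (hne : ∀ f ∈ F, f.supp.Nonempty) (a₀ : A)
    (β : ℝ) (hβ : 0 < β)
    (hsum : Summable fun f : F => (f.1.supp.card : ℝ) * β ^ (1 - (f.1.supp.card : ℤ)))
    (hcond : (Fintype.card A : ℝ) -
        ∑' f : F, (f.1.supp.card : ℝ) * β ^ (1 - (f.1.supp.card : ℤ)) ≥ β) :
    ∀ S : Finset G, (XLA F a₀ S).Nonempty := by
  have hpos : ∀ S : Finset G, 0 < (XLA F a₀ S).ncard := by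
    intro S
    induction S using Finset.induction_on with
    | empty =>
      have hempty : XLA F a₀ (∅ : Finset G) = {fun _ => a₀} := by
        ext q
        constructor
        · rintro ⟨-, hdef⟩
          exact funext fun h => hdef h (Finset.notMem_empty h)
        · rintro rfl
          refine ⟨fun f hf t ht => ?_, fun h _ => rfl⟩
          obtain ⟨s, hs⟩ := hne f hf
          exact absurd (ht s hs) (Finset.notMem_empty _)
      rw [hempty, Set.ncard_singleton]
      norm_num
    | @insert g S hg ih =>
      have hk := key_step F hne a₀ β hβ hsum hcond S.card S rfl g hg
      have h1 : (1:ℝ) ≤ ((XLA F a₀ S).ncard : ℝ) := by exact_mod_cast ih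
      have h2 : (0:ℝ) < ((XLA F a₀ (insert g S)).ncard : ℝ) :=
        lt_of_lt_of_le (by nlinarith) hk
      exact_mod_cast h2
  intro S
  exact Set.nonempty_of_ncard_ne_zero (hpos S).ne'

end Pos


/-- If there is `β > 0` with `|A| - ∑_{f∈F} |f|·β^{1-|f|} ≥ β`, then the subshift `X_F`
is nonempty. -/
theorem shiftSpace_nonempty {G A : Type*} [Group G] [Countable G] [Fintype A]
    (F : Set (Pattern G A)) (hne : ∀ f ∈ F, f.supp.Nonempty)
    (β : ℝ) (hβ : 0 < β)
    (hsum : Summable fun f : F => (f.1.supp.card : ℝ) * β ^ (1 - (f.1.supp.card : ℤ)))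
    (hcond : (Fintype.card A : ℝ) -
        ∑' f : F, (f.1.supp.card : ℝ) * β ^ (1 - (f.1.supp.card : ℤ)) ≥ β) :
    (shiftSpace F).Nonempty := by
  classical
  have hA : Nonempty A := by
    have htn : 0 ≤ ∑' f : F, (f.1.supp.card : ℝ) * β ^ (1 - (f.1.supp.card : ℤ)) :=
      tsum_nonneg (fun f => mul_nonneg (Nat.cast_nonneg _) (zpow_pos hβ _).le)
    have h1 : (0:ℝ) < (Fintype.card A : ℝ) := by linarith
    have h2 : 0 < Fintype.card A := by exact_mod_cast h1
    exact Fintype.card_pos_iff.mp h2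
  obtain ⟨a₀⟩ := hA
  letI : TopologicalSpace A := ⊥
  haveI : DiscreteTopology A := ⟨rfl⟩
  have hLA : ∀ S : Finset G, (XLA F a₀ S).Nonempty :=
    XLA_nonempty F hne a₀ β hβ hsum hcond
  set C : Finset G → Set (G → A) := fun S => {x | XIsLA F S x} with hC
  have hCne : ∀ S, (C S).Nonempty := fun S => (hLA S).imp (fun q hq => hq.1)
  have hCdir : Directed (· ⊇ ·) C := by
    intro S T
    exact ⟨S ∪ T, fun x hx => hx.mono Finset.subset_union_left,
      fun x hx => hx.mono Finset.subset_union_right⟩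
  have hCclosed : ∀ S, IsClosed (C S) := by
    intro S
    have hrw : C S = ⋂ (f : ↥F) (t : G) (_ : ∀ s ∈ f.1.supp, t * s ∈ S),
        ⋃ s ∈ f.1.supp, {x : G → A | x (t * s) ≠ f.1.val s} := by
      ext x
      simp only [Set.mem_iInter, Set.mem_iUnion, hC, Set.mem_setOf_eq]
      constructor
      · intro hx f t ht
        obtain ⟨s, hs, hnex⟩ := hx f.1 f.2 t ht
        exact ⟨s, hs, hnex⟩
      · intro hx f hf t ht
        obtain ⟨s, hs, hnex⟩ := hx ⟨f, hf⟩ t ht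
        exact ⟨s, hs, hnex⟩
    rw [hrw]
    refine isClosed_iInter fun f => isClosed_iInter fun t => isClosed_iInter fun _ => ?_
    refine Set.Finite.isClosed_biUnion f.1.supp.finite_toSet (fun s _ => ?_)
    have heq : {x : G → A | x (t * s) ≠ f.1.val s}
        = (fun x : G → A => x (t * s)) ⁻¹' {f.1.val s}ᶜ := rfl
    rw [heq]
    exact (isClosed_discrete _).preimage (continuous_apply _)
  have hCcompact : ∀ S, IsCompact (C S) := fun S => (hCclosed S).isCompact
  obtain ⟨x, hx⟩ := IsCompact.nonempty_iInter_of_directed_nonempty_isCompact_isClosed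
    C hCdir hCne hCcompact hCclosed
  refine ⟨x, ?_⟩
  intro f hf hap
  obtain ⟨t, hmatch⟩ := hap
  have hxS := Set.mem_iInter.mp hx (f.supp.image (fun s => t * s))
  obtain ⟨s, hs, hnex⟩ := hxS f hf t (fun s hs => Finset.mem_image_of_mem _ hs)
  exact hnex (hmatch s hs)
end

section
/- For every infinite countable group G and every ε > 0, there exists a subshift X ⊆ {0,1}^G that is strongly aperiodic and has growth α(X) ≥ 2 − ε. -/
open scoped Classical

namespace ApAux

variable {G : Type*} [Group G]

lemma exists_testset [Infinite G] (g : G) (hg : g ≠ 1) (n : ℕ) :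
    ∃ T : Finset G, T.card = n ∧ ∀ t ∈ T, g * t ∉ T := by
  induction n with
  | zero => exact ⟨∅, rfl, by simp⟩
  | succ n ih =>
    obtain ⟨T, hc, hd⟩ := ih
    obtain ⟨a, ha⟩ := Infinite.exists_notMem_finset
      (T ∪ T.image (fun t => g * t) ∪ T.image (fun t => g⁻¹ * t))
    simp only [Finset.mem_union, Finset.mem_image, not_or, not_exists, not_and] at ha
    obtain ⟨⟨haT, hgT⟩, hginvT⟩ := ha
    refine ⟨insert a T, by rw [Finset.card_insert_of_notMem haT, hc], ?_⟩
    intro t ht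
    simp only [Finset.mem_insert] at ht ⊢
    push_neg
    rcases ht with rfl | htT
    · refine ⟨fun h => hg ?_, fun h => hginvT _ h ?_⟩
      · have : g * t = 1 * t := by rw [h, one_mul]
        exact mul_right_cancel this
      · rw [inv_mul_cancel_left]
    · exact ⟨fun h => hgT t htT h, fun h => hd t htT h⟩

noncomputable def Dset (s : ℕ → G) (T : ℕ → Finset G) (i : ℕ) : Finset G :=
  T i ∪ (T i).image (fun t => s i * t)

def FF (s : ℕ → G) (T : ℕ → Finset G) : Set (Pattern G Bool) :=
  {p | ∃ i, s i ≠ 1 ∧ p.supp = Dset s T i ∧ ∀ t ∈ T i, p.val (s i * t) = p.val t}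

lemma mem_shiftSpace_iff (s : ℕ → G) (T : ℕ → Finset G) (x : G → Bool) :
    x ∈ shiftSpace (FF s T) ↔
      ∀ i, s i ≠ 1 → ∀ g : G, ∃ t ∈ T i, x (g * (s i * t)) ≠ x (g * t) := by
  constructor
  · intro hx i hi g
    by_contra hcon
    push_neg at hcon
    have hmem : (⟨Dset s T i, fun h => x (g * h)⟩ : Pattern G Bool) ∈ FF s T := by
      exact ⟨i, hi, rfl, fun t ht => hcon t ht⟩
    exact hx _ hmem ⟨g, fun a _ => rfl⟩
  · intro h p hp hap
    obtain ⟨i, hi, hsupp, hper⟩ := hp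
    obtain ⟨g, hg⟩ := hap
    obtain ⟨t, ht, hne⟩ := h i hi g
    apply hne
    have h1 : s i * t ∈ p.supp := by
      rw [hsupp]; exact Finset.mem_union_right _ (Finset.mem_image_of_mem _ ht)
    have h2 : t ∈ p.supp := by rw [hsupp]; exact Finset.mem_union_left _ ht
    rw [hg _ h1, hg _ h2, hper t ht]

def locAdm (s : ℕ → G) (T : ℕ → Finset G) (E u : Finset G) : Prop :=
  ∀ i, s i ≠ 1 → ∀ g : G, (Dset s T i).image (fun d => g * d) ⊆ E →
    ∃ t ∈ T i, ¬ ((g * (s i * t) ∈ u) ↔ (g * t ∈ u))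

noncomputable def Adm (s : ℕ → G) (T : ℕ → Finset G) (E : Finset G) : Finset (Finset G) :=
  E.powerset.filter (locAdm s T E)

lemma mem_Adm {s : ℕ → G} {T : ℕ → Finset G} {E u : Finset G} :
    u ∈ Adm s T E ↔ u ⊆ E ∧ locAdm s T E u := by
  simp [Adm, Finset.mem_filter, Finset.mem_powerset]

lemma pts_mem_image {s : ℕ → G} {T : ℕ → Finset G} {i : ℕ} {t : G} (ht : t ∈ T i) (g : G) :
    g * (s i * t) ∈ (Dset s T i).image (fun d => g * d) ∧
      g * t ∈ (Dset s T i).image (fun d => g * d) := by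
  constructor
  · exact Finset.mem_image_of_mem _ (Finset.mem_union_right _ (Finset.mem_image_of_mem _ ht))
  · exact Finset.mem_image_of_mem _ (Finset.mem_union_left _ ht)

lemma adm_sdiff {s : ℕ → G} {T : ℕ → Finset G} {E u : Finset G}
    (hu : u ∈ Adm s T E) (R : Finset G) : u \ R ∈ Adm s T (E \ R) := by
  rw [mem_Adm] at hu ⊢
  refine ⟨Finset.sdiff_subset_sdiff hu.1 le_rfl, ?_⟩
  intro i hi g himg
  have himg' : (Dset s T i).image (fun d => g * d) ⊆ E :=
    himg.trans (Finset.sdiff_subset)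
  obtain ⟨t, ht, hne⟩ := hu.2 i hi g himg'
  refine ⟨t, ht, fun hiff => hne ?_⟩
  have h1 := (pts_mem_image (s := s) ht g).1
  have h2 := (pts_mem_image (s := s) ht g).2
  have h1R : g * (s i * t) ∉ R := (Finset.mem_sdiff.1 (himg h1)).2
  have h2R : g * t ∉ R := (Finset.mem_sdiff.1 (himg h2)).2
  constructor
  · intro hm; have := hiff.1 (Finset.mem_sdiff.2 ⟨hm, h1R⟩); exact (Finset.mem_sdiff.1 this).1
  · intro hm; have := hiff.2 (Finset.mem_sdiff.2 ⟨hm, h2R⟩); exact (Finset.mem_sdiff.1 this).1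

lemma adm_inter {s : ℕ → G} {T : ℕ → Finset G} {E E' u : Finset G}
    (hu : u ∈ Adm s T E) (hE : E' ⊆ E) : u ∩ E' ∈ Adm s T E' := by
  have h := adm_sdiff hu (E \ E')
  have h1 : E \ (E \ E') = E' := by
    ext a
    simp only [Finset.mem_sdiff, not_and, not_not]
    exact ⟨fun h => h.2 h.1, fun h => ⟨hE h, fun _ => h⟩⟩
  have h2 : u \ (E \ E') = u ∩ E' := by
    have husub := (mem_Adm.1 hu).1
    ext a
    simp only [Finset.mem_sdiff, Finset.mem_inter, not_and, not_not]
    constructor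
    · intro ⟨ha, hb⟩; exact ⟨ha, hb (husub ha)⟩
    · intro ⟨ha, hb⟩; exact ⟨ha, fun _ => hb⟩
  rwa [h1, h2] at h


lemma geom_aux : ∀ M : ℕ, (∑ i ∈ Finset.range M, ((1:ℝ)/2)^(i+1)) = 1 - (1/2)^M := by
  intro M
  induction M with
  | zero => simp
  | succ M ih =>
    rw [Finset.sum_range_succ, ih, pow_succ]
    ring

section Key

variable {s : ℕ → G} {T : ℕ → Finset G} {C : ℕ → ℕ} {δ β : ℝ}

lemma removal_aux (hβ0 : 0 < β) {n : ℕ}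
    (hkey : ∀ E : Finset G, E.card ≤ n → ∀ g ∈ E,
      β * ((Adm s T (E.erase g)).card : ℝ) ≤ ((Adm s T E).card : ℝ)) :
    ∀ (R W : Finset G), W.card ≤ n → R ⊆ W →
      β ^ R.card * ((Adm s T (W \ R)).card : ℝ) ≤ ((Adm s T W).card : ℝ) := by
  intro R
  induction R using Finset.induction_on with
  | empty => intro W _ _; simp
  | @insert a R ha ih =>
    intro W hW hsub
    have haW : a ∈ W := hsub (Finset.mem_insert_self a R)
    have haWR : a ∈ W \ R := Finset.mem_sdiff.2 ⟨haW, ha⟩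
    have hWRcard : (W \ R).card ≤ n := le_trans (Finset.card_le_card Finset.sdiff_subset) hW
    have hstep := hkey (W \ R) hWRcard a haWR
    have heq : W \ insert a R = (W \ R).erase a := by
      ext b
      simp only [Finset.mem_sdiff, Finset.mem_insert, Finset.mem_erase, not_or]
      tauto
    have hcard : (insert a R).card = R.card + 1 := Finset.card_insert_of_notMem ha
    rw [heq, hcard, pow_succ]
    calc β ^ R.card * β * ((Adm s T ((W \ R).erase a)).card : ℝ)
        = β ^ R.card * (β * ((Adm s T ((W \ R).erase a)).card : ℝ)) := by ring
      _ ≤ β ^ R.card * ((Adm s T (W \ R)).card : ℝ) :=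
          mul_le_mul_of_nonneg_left hstep (le_of_lt (pow_pos hβ0 _))
      _ ≤ _ := ih W hW ((Finset.subset_insert a R).trans hsub)

lemma key (hδ : 0 < δ) (hβδ : β = 2 - δ) (hβ0 : 0 < β)
    (hTcard : ∀ i, s i ≠ 1 → (T i).card = C i)
    (hTdisj : ∀ i, s i ≠ 1 → ∀ t ∈ T i, s i * t ∉ T i)
    (hC1 : ∀ i, i + 1 ≤ C i)
    (hC2 : ∀ i, 2 * (C i : ℝ) * 2 ^ (i + 1) ≤ δ * β ^ (C i - 1)) :
    ∀ n : ℕ, ∀ E : Finset G, E.card ≤ n → ∀ g ∈ E,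
      β * ((Adm s T (E.erase g)).card : ℝ) ≤ ((Adm s T E).card : ℝ) := by
  intro n
  induction n with
  | zero =>
    intro E hE g hg
    rw [Nat.le_zero, Finset.card_eq_zero] at hE
    subst hE
    exact absurd hg (Finset.notMem_empty g)
  | succ n IH =>
    intro E hE g hg
    have hrem := removal_aux (s := s) (T := T) hβ0 IH
    set E' := E.erase g with hE'def
    set Cand := E.powerset.filter (fun u => u.erase g ∈ Adm s T E') with hCandDef
    have hCmem : ∀ u : Finset G, u ∈ Cand ↔ (u ⊆ E ∧ u.erase g ∈ Adm s T E') := by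
      intro u; simp [hCandDef, Finset.mem_filter, Finset.mem_powerset]
    have hsplit : Cand = Adm s T E' ∪ (Adm s T E').image (insert g) := by
      ext u
      rw [hCmem]
      constructor
      · rintro ⟨huE, hue⟩
        by_cases hgu : g ∈ u
        · exact Finset.mem_union_right _
            (Finset.mem_image.2 ⟨u.erase g, hue, Finset.insert_erase hgu⟩)
        · exact Finset.mem_union_left _ (by rwa [Finset.erase_eq_of_notMem hgu] at hue)
      · intro hu
        rcases Finset.mem_union.1 hu with hv | hv
        · have hvE' : u ⊆ E' := (mem_Adm.1 hv).1
          have hgv : g ∉ u := fun h => (Finset.notMem_erase g E) (hvE' h)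
          exact ⟨hvE'.trans (Finset.erase_subset g E), by rwa [Finset.erase_eq_of_notMem hgv]⟩
        · obtain ⟨v, hvA, rfl⟩ := Finset.mem_image.1 hv
          have hvE' : v ⊆ E' := (mem_Adm.1 hvA).1
          have hgv : g ∉ v := fun h => (Finset.notMem_erase g E) (hvE' h)
          refine ⟨Finset.insert_subset hg (hvE'.trans (Finset.erase_subset g E)), ?_⟩
          rwa [Finset.erase_insert hgv]
    have hgnotmem : ∀ v ∈ Adm s T E', g ∉ v := fun v hv h =>
      (Finset.notMem_erase g E) ((mem_Adm.1 hv).1 h)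
    have hdisj : Disjoint (Adm s T E') ((Adm s T E').image (insert g)) := by
      rw [Finset.disjoint_left]
      rintro u hu hu'
      obtain ⟨v, hv, rfl⟩ := Finset.mem_image.1 hu'
      exact hgnotmem _ hu (Finset.mem_insert_self g v)
    have hinj : Set.InjOn (insert g) (Adm s T E' : Set (Finset G)) := by
      intro v hv v' hv' hvv'
      rw [← Finset.erase_insert (hgnotmem v hv), ← Finset.erase_insert (hgnotmem v' hv'), hvv']
    have hCandcard : Cand.card = 2 * (Adm s T E').card := by
      rw [hsplit, Finset.card_union_of_disjoint hdisj, Finset.card_image_of_injOn hinj]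
      ring
    have hAdmSub : Adm s T E ⊆ Cand := by
      intro u hu
      rw [hCmem]
      refine ⟨(mem_Adm.1 hu).1, ?_⟩
      have h := adm_inter hu (Finset.erase_subset g E)
      have heq : u ∩ E' = u.erase g := by
        have huE := (mem_Adm.1 hu).1
        ext a
        simp only [Finset.mem_inter, Finset.mem_erase, hE'def]
        have haE : a ∈ u → a ∈ E := fun h => huE h
        tauto
      rwa [heq] at h
    set Bad := Cand \ Adm s T E with hBadDef
    have hcards : Bad.card + (Adm s T E).card = Cand.card :=
      Finset.card_sdiff_add_card_eq_card hAdmSub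
    set K := (Finset.range E.card).filter (fun i => s i ≠ 1) with hKdef
    set H : ℕ → Finset G := fun i =>
      ((Dset s T i).image (fun d => g * d⁻¹)).filter
        (fun h => (Dset s T i).image (fun d => h * d) ⊆ E) with hHdef
    set V : ℕ → G → Finset (Finset G) := fun i h =>
      Cand.filter (fun u => ∀ t ∈ T i, ((h * (s i * t) ∈ u) ↔ (h * t ∈ u))) with hVdef
    have hBadSub : Bad ⊆ K.biUnion (fun i => (H i).biUnion (fun h => V i h)) := by
      intro u hu
      obtain ⟨huC, huA⟩ := Finset.mem_sdiff.1 hu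
      have huE : u ⊆ E := ((hCmem u).1 huC).1
      have hue : u.erase g ∈ Adm s T E' := ((hCmem u).1 huC).2
      have hnl : ¬ locAdm s T E u := fun h => huA (mem_Adm.2 ⟨huE, h⟩)
      rw [locAdm] at hnl
      push_neg at hnl
      obtain ⟨i, hi, h, himg, hper⟩ := hnl
      have hper' : ∀ t ∈ T i, ((h * (s i * t) ∈ u) ↔ (h * t ∈ u)) := hper
      have hgim : g ∈ (Dset s T i).image (fun d => h * d) := by
        by_contra hgim
        have himg' : (Dset s T i).image (fun d => h * d) ⊆ E' := by
          intro a haim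
          exact Finset.mem_erase.2 ⟨fun h' => hgim (h' ▸ haim), himg haim⟩
        obtain ⟨t, ht, hne⟩ := (mem_Adm.1 hue).2 i hi h himg'
        apply hne
        have p1 : h * (s i * t) ∈ E' := himg' (pts_mem_image ht h).1
        have p2 : h * t ∈ E' := himg' (pts_mem_image ht h).2
        have q1 : h * (s i * t) ≠ g := (Finset.mem_erase.1 p1).1
        have q2 : h * t ≠ g := (Finset.mem_erase.1 p2).1
        constructor
        · intro hm
          exact Finset.mem_erase.2 ⟨q2, (hper' t ht).1 (Finset.mem_erase.1 hm).2⟩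
        · intro hm
          exact Finset.mem_erase.2 ⟨q1, (hper' t ht).2 (Finset.mem_erase.1 hm).2⟩
      have hiK : i ∈ K := by
        rw [hKdef, Finset.mem_filter, Finset.mem_range]
        refine ⟨?_, hi⟩
        have h1 : ((T i).image (fun d => h * d)).card = C i := by
          rw [Finset.card_image_of_injective _ (mul_right_injective h), hTcard i hi]
        have h2 : (T i).image (fun d => h * d) ⊆ E :=
          (Finset.image_subset_image Finset.subset_union_left).trans himg
        have h3 := Finset.card_le_card h2
        rw [h1] at h3
        have h4 := hC1 i
        omega
      have hhH : h ∈ H i := by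
        obtain ⟨d, hd, hdg⟩ := Finset.mem_image.1 hgim
        rw [hHdef]
        refine Finset.mem_filter.2 ⟨Finset.mem_image.2 ⟨d, hd, ?_⟩, himg⟩
        rw [← hdg]
        group
      exact Finset.mem_biUnion.2 ⟨i, hiK, Finset.mem_biUnion.2
        ⟨h, hhH, Finset.mem_filter.2 ⟨huC, hper'⟩⟩⟩
    have hVcard : ∀ i ∈ K, ∀ h ∈ H i,
        ((V i h).card : ℝ) * β ^ (C i - 1) ≤ ((Adm s T E').card : ℝ) := by
      intro i hiK h hhH
      have hi : s i ≠ 1 := by rw [hKdef, Finset.mem_filter] at hiK; exact hiK.2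
      have hhH' := hhH
      rw [hHdef, Finset.mem_filter] at hhH'
      obtain ⟨hgim0, himg⟩ := hhH'
      obtain ⟨d, hd, hdh⟩ := Finset.mem_image.1 hgim0
      have hgim : g = h * d := by rw [← hdh]; group
      set A := (T i).image (fun t => h * t) with hAdef
      set B := (T i).image (fun t => h * (s i * t)) with hBdef
      have hBA : ∀ t ∈ T i, h * (s i * t) ∉ A := by
        intro t ht hmem
        obtain ⟨t', ht', heq⟩ := Finset.mem_image.1 hmem
        have he : t' = s i * t := mul_left_cancel heq
        exact hTdisj i hi t ht (he ▸ ht')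
      have hAB : ∀ t ∈ T i, h * t ∉ B := by
        intro t ht hmem
        obtain ⟨t', ht', heq⟩ := Finset.mem_image.1 hmem
        have he : s i * t' = t := mul_left_cancel heq
        exact hTdisj i hi t' ht' (he ▸ ht)
      have hABE : A ∪ B ⊆ E := by
        intro a ha
        apply himg
        rcases Finset.mem_union.1 ha with ha | ha
        · obtain ⟨t, ht, rfl⟩ := Finset.mem_image.1 ha
          exact Finset.mem_image_of_mem _ (Finset.mem_union_left _ ht)
        · obtain ⟨t, ht, rfl⟩ := Finset.mem_image.1 ha
          exact Finset.mem_image_of_mem _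
            (Finset.mem_union_right _ (Finset.mem_image_of_mem _ ht))
      have hgAB : g ∈ A ∪ B := by
        have hd' : d ∈ T i ∪ (T i).image (fun t => s i * t) := hd
        rcases Finset.mem_union.1 hd' with hdT | hdT
        · exact Finset.mem_union_left _ (by rw [hgim]; exact Finset.mem_image_of_mem _ hdT)
        · obtain ⟨t, ht, rfl⟩ := Finset.mem_image.1 hdT
          exact Finset.mem_union_right _ (by rw [hgim]; exact Finset.mem_image_of_mem _ ht)
      set R := if g ∈ A then A else B with hRdef
      have hgR : g ∈ R := by
        rw [hRdef]; split_ifs with hga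
        · exact hga
        · rcases Finset.mem_union.1 hgAB with h1 | h1
          · exact absurd h1 hga
          · exact h1
      have hRE : R ⊆ E := by
        rw [hRdef]; split_ifs
        · exact (Finset.subset_union_left).trans hABE
        · exact (Finset.subset_union_right).trans hABE
      have hRcard : R.card = C i := by
        rw [hRdef]; split_ifs
        · rw [hAdef, Finset.card_image_of_injective _ (mul_right_injective h), hTcard i hi]
        · rw [hBdef]
          have hinj2 : Function.Injective (fun t => h * (s i * t)) := fun a b hab =>
            mul_left_cancel (mul_left_cancel hab)
          rw [Finset.card_image_of_injective _ hinj2, hTcard i hi]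
      have hpart : ∀ a ∈ R, ∃ p, p ∉ R ∧
          ∀ u : Finset G, (∀ t ∈ T i, ((h * (s i * t) ∈ u) ↔ (h * t ∈ u))) →
            (a ∈ u ↔ p ∈ u) := by
        intro a haR
        rw [hRdef] at haR ⊢
        split_ifs at haR ⊢ with hga
        · obtain ⟨t, ht, rfl⟩ := Finset.mem_image.1 haR
          exact ⟨h * (s i * t), hBA t ht, fun u hu => (hu t ht).symm⟩
        · obtain ⟨t, ht, rfl⟩ := Finset.mem_image.1 haR
          exact ⟨h * t, hAB t ht, fun u hu => hu t ht⟩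
      have hVmem : ∀ u ∈ V i h, u ∈ Cand ∧
          ∀ t ∈ T i, ((h * (s i * t) ∈ u) ↔ (h * t ∈ u)) := by
        intro u hu
        rw [hVdef] at hu
        exact Finset.mem_filter.1 hu
      have hinjV : Set.InjOn (fun u => u \ R) ↑(V i h) := by
        intro u hu u' hu' heq
        obtain ⟨huC, hcu⟩ := hVmem u (Finset.mem_coe.1 hu)
        obtain ⟨huC', hcu'⟩ := hVmem u' (Finset.mem_coe.1 hu')
        simp only at heq
        ext a
        by_cases haR : a ∈ R
        · obtain ⟨p, hpR, hp⟩ := hpart a haR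
          have e1 : a ∈ u ↔ p ∈ u := hp u hcu
          have e2 : a ∈ u' ↔ p ∈ u' := hp u' hcu'
          have e3 : p ∈ u ↔ p ∈ u \ R := by simp [Finset.mem_sdiff, hpR]
          have e4 : p ∈ u' ↔ p ∈ u' \ R := by simp [Finset.mem_sdiff, hpR]
          rw [e1, e3, heq, ← e4, ← e2]
        · have e3 : a ∈ u ↔ a ∈ u \ R := by simp [Finset.mem_sdiff, haR]
          have e4 : a ∈ u' ↔ a ∈ u' \ R := by simp [Finset.mem_sdiff, haR]
          rw [e3, heq, ← e4]
      have hmapV : ∀ u ∈ V i h, u \ R ∈ Adm s T (E' \ R.erase g) := by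
        intro u hu
        obtain ⟨huC, hcu⟩ := hVmem u hu
        have hue : u.erase g ∈ Adm s T E' := ((hCmem u).1 huC).2
        have h2 := adm_sdiff hue (R.erase g)
        have e1 : u.erase g \ R.erase g = u \ R := by
          ext a
          have hgR' : a = g → a ∈ R := fun hh => hh ▸ hgR
          simp only [Finset.mem_sdiff, Finset.mem_erase, not_and, not_not]
          constructor
          · rintro ⟨⟨hag, hau⟩, h3⟩
            exact ⟨hau, h3 hag⟩
          · rintro ⟨hau, haR⟩
            exact ⟨⟨fun hag => haR (hgR' hag), hau⟩, fun _ haR2 => absurd haR2 haR⟩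
        rwa [e1] at h2
      have hVle : (V i h).card ≤ (Adm s T (E' \ R.erase g)).card :=
        Finset.card_le_card_of_injOn _ hmapV hinjV
      have hRsub : R.erase g ⊆ E' := by
        intro a ha
        obtain ⟨hag, haR⟩ := Finset.mem_erase.1 ha
        exact Finset.mem_erase.2 ⟨hag, hRE haR⟩
      have hE'card : E'.card ≤ n := by
        rw [hE'def, Finset.card_erase_of_mem hg]; omega
      have hrem' := hrem (R.erase g) E' hE'card hRsub
      have hRec : (R.erase g).card = C i - 1 := by
        rw [Finset.card_erase_of_mem hgR, hRcard]
      rw [hRec] at hrem'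
      calc ((V i h).card : ℝ) * β ^ (C i - 1)
          ≤ ((Adm s T (E' \ R.erase g)).card : ℝ) * β ^ (C i - 1) := by
            apply mul_le_mul_of_nonneg_right _ (le_of_lt (pow_pos hβ0 _))
            exact_mod_cast hVle
        _ = β ^ (C i - 1) * ((Adm s T (E' \ R.erase g)).card : ℝ) := by ring
        _ ≤ _ := hrem'
    have hNnn : (0:ℝ) ≤ ((Adm s T E').card : ℝ) := Nat.cast_nonneg _
    have hHcard : ∀ i ∈ K, ((H i).card : ℝ) ≤ 2 * C i := by
      intro i hiK
      have hi : s i ≠ 1 := by rw [hKdef, Finset.mem_filter] at hiK; exact hiK.2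
      have h1 : (H i).card ≤ (Dset s T i).card :=
        (Finset.card_filter_le _ _).trans (Finset.card_image_le)
      have h2 : (Dset s T i).card ≤ 2 * C i := by
        calc (Dset s T i).card ≤ (T i).card + ((T i).image (fun t => s i * t)).card :=
              Finset.card_union_le _ _
          _ ≤ C i + C i := add_le_add (le_of_eq (hTcard i hi))
              ((Finset.card_image_le).trans (le_of_eq (hTcard i hi)))
          _ = 2 * C i := by ring
      exact_mod_cast h1.trans h2
    have hsum : (Bad.card : ℝ) ≤ δ * ((Adm s T E').card : ℝ) := by
      have h1 : (Bad.card : ℝ) ≤ ∑ i ∈ K, ∑ h ∈ H i, ((V i h).card : ℝ) := by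
        have hb1 := Finset.card_le_card hBadSub
        have hb2 := Finset.card_biUnion_le (s := K)
          (t := fun i => (H i).biUnion (fun h => V i h))
        have hb3 : ∑ i ∈ K, ((H i).biUnion fun h => V i h).card
            ≤ ∑ i ∈ K, ∑ h ∈ H i, (V i h).card :=
          Finset.sum_le_sum fun i _ => Finset.card_biUnion_le
        have := (hb1.trans hb2).trans hb3
        push_cast
        exact_mod_cast this
      have h2 : ∀ i ∈ K, ∑ h ∈ H i, ((V i h).card : ℝ)
          ≤ (δ * (1/2)^(i+1)) * ((Adm s T E').card : ℝ) := by
        intro i hiK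
        have hβpow : (0:ℝ) < β ^ (C i - 1) := pow_pos hβ0 _
        have h2pow : (0:ℝ) < (2:ℝ) ^ (i+1) := by positivity
        have hVb : ∀ h ∈ H i, ((V i h).card : ℝ)
            ≤ ((Adm s T E').card : ℝ) / β ^ (C i - 1) := by
          intro h hh
          rw [le_div_iff₀ hβpow]
          exact hVcard i hiK h hh
        have hkey2 : (2 * (C i:ℝ)) / β ^ (C i - 1) ≤ δ * (1/2)^(i+1) := by
          rw [div_le_iff₀ hβpow]
          have e2 : δ * (1/2:ℝ)^(i+1) * β^(C i - 1) = (δ * β^(C i - 1)) / 2^(i+1) := by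
            rw [div_pow]; ring
          rw [e2, le_div_iff₀ h2pow]
          have := hC2 i
          linarith
        calc ∑ h ∈ H i, ((V i h).card : ℝ)
            ≤ ∑ _h ∈ H i, ((Adm s T E').card : ℝ) / β ^ (C i - 1) :=
              Finset.sum_le_sum hVb
          _ = ((H i).card : ℝ) * (((Adm s T E').card : ℝ) / β ^ (C i - 1)) := by
              rw [Finset.sum_const, nsmul_eq_mul]
          _ ≤ (2 * (C i:ℝ)) * (((Adm s T E').card : ℝ) / β ^ (C i - 1)) :=
              mul_le_mul_of_nonneg_right (hHcard i hiK)
                (div_nonneg hNnn (le_of_lt hβpow))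
          _ = ((2 * (C i:ℝ)) / β ^ (C i - 1)) * ((Adm s T E').card : ℝ) := by ring
          _ ≤ (δ * (1/2)^(i+1)) * ((Adm s T E').card : ℝ) :=
              mul_le_mul_of_nonneg_right hkey2 hNnn
      have h3 : ∑ i ∈ K, (δ * (1/2:ℝ)^(i+1)) ≤ δ := by
        have hsub : K ⊆ Finset.range E.card := Finset.filter_subset _ _
        have h4 : ∑ i ∈ K, (δ * (1/2:ℝ)^(i+1))
            ≤ ∑ i ∈ Finset.range E.card, (δ * (1/2:ℝ)^(i+1)) :=
          Finset.sum_le_sum_of_subset_of_nonneg hsub (fun i _ _ => by positivity)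
        have h5 : ∑ i ∈ Finset.range E.card, (δ * (1/2:ℝ)^(i+1))
            = δ * (1 - (1/2)^E.card) := by rw [← Finset.mul_sum, geom_aux]
        have h6 : (0:ℝ) ≤ (1/2:ℝ)^E.card := by positivity
        calc ∑ i ∈ K, (δ * (1/2:ℝ)^(i+1)) ≤ δ * (1 - (1/2)^E.card) := h4.trans (le_of_eq h5)
          _ ≤ δ := by nlinarith
      calc (Bad.card : ℝ) ≤ ∑ i ∈ K, ∑ h ∈ H i, ((V i h).card : ℝ) := h1
        _ ≤ ∑ i ∈ K, (δ * (1/2)^(i+1)) * ((Adm s T E').card : ℝ) := Finset.sum_le_sum h2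
        _ = (∑ i ∈ K, (δ * (1/2:ℝ)^(i+1))) * ((Adm s T E').card : ℝ) := by
            rw [Finset.sum_mul]
        _ ≤ δ * ((Adm s T E').card : ℝ) := mul_le_mul_of_nonneg_right h3 hNnn
    have hCC : ((Cand.card : ℕ) : ℝ) = 2 * ((Adm s T E').card : ℝ) := by
      exact_mod_cast hCandcard
    have hBB : ((Bad.card : ℕ) : ℝ) + ((Adm s T E).card : ℝ) = ((Cand.card : ℕ) : ℝ) := by
      exact_mod_cast hcards
    rw [hβδ]
    linarith



lemma removal (hδ : 0 < δ) (hβδ : β = 2 - δ) (hβ0 : 0 < β)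
    (hTcard : ∀ i, s i ≠ 1 → (T i).card = C i)
    (hTdisj : ∀ i, s i ≠ 1 → ∀ t ∈ T i, s i * t ∉ T i)
    (hC1 : ∀ i, i + 1 ≤ C i)
    (hC2 : ∀ i, 2 * (C i : ℝ) * 2 ^ (i + 1) ≤ δ * β ^ (C i - 1)) :
    ∀ (R W : Finset G), R ⊆ W →
      β ^ R.card * ((Adm s T (W \ R)).card : ℝ) ≤ ((Adm s T W).card : ℝ) := by
  intro R W hsub
  exact removal_aux hβ0 (key hδ hβδ hβ0 hTcard hTdisj hC1 hC2 W.card) R W le_rfl hsub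

lemma adm_empty (hT : ∀ i, s i ≠ 1 → (T i).Nonempty) :
    Adm s T (∅ : Finset G) = {∅} := by
  ext u
  rw [mem_Adm]
  simp only [Finset.subset_empty, Finset.mem_singleton]
  constructor
  · rintro ⟨rfl, _⟩; rfl
  · rintro rfl
    refine ⟨rfl, ?_⟩
    intro i hi g himg
    obtain ⟨t, ht⟩ := hT i hi
    have : g * t ∈ (∅ : Finset G) := himg (pts_mem_image ht g).2
    exact absurd this (Finset.notMem_empty _)

lemma Nc_lower (hδ : 0 < δ) (hβδ : β = 2 - δ) (hβ0 : 0 < β)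
    (hTcard : ∀ i, s i ≠ 1 → (T i).card = C i)
    (hTdisj : ∀ i, s i ≠ 1 → ∀ t ∈ T i, s i * t ∉ T i)
    (hC1 : ∀ i, i + 1 ≤ C i)
    (hC2 : ∀ i, 2 * (C i : ℝ) * 2 ^ (i + 1) ≤ δ * β ^ (C i - 1)) :
    ∀ E : Finset G, β ^ E.card ≤ ((Adm s T E).card : ℝ) := by
  intro E
  have h := removal hδ hβδ hβ0 hTcard hTdisj hC1 hC2 E E subset_rfl
  have hT : ∀ i, s i ≠ 1 → (T i).Nonempty := by
    intro i hi
    rw [← Finset.card_pos, hTcard i hi]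
    have := hC1 i
    omega
  rw [Finset.sdiff_self, adm_empty hT] at h
  simpa using h

lemma Nc_pos (hδ : 0 < δ) (hβδ : β = 2 - δ) (hβ0 : 0 < β)
    (hTcard : ∀ i, s i ≠ 1 → (T i).card = C i)
    (hTdisj : ∀ i, s i ≠ 1 → ∀ t ∈ T i, s i * t ∉ T i)
    (hC1 : ∀ i, i + 1 ≤ C i)
    (hC2 : ∀ i, 2 * (C i : ℝ) * 2 ^ (i + 1) ≤ δ * β ^ (C i - 1)) :
    ∀ E : Finset G, (0:ℝ) < ((Adm s T E).card : ℝ) := by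
  intro E
  exact lt_of_lt_of_le (pow_pos hβ0 _) (Nc_lower hδ hβδ hβ0 hTcard hTdisj hC1 hC2 E)

lemma img_lower (hδ : 0 < δ) (hβδ : β = 2 - δ) (hβ0 : 0 < β)
    (hTcard : ∀ i, s i ≠ 1 → (T i).card = C i)
    (hTdisj : ∀ i, s i ≠ 1 → ∀ t ∈ T i, s i * t ∉ T i)
    (hC1 : ∀ i, i + 1 ≤ C i)
    (hC2 : ∀ i, 2 * (C i : ℝ) * 2 ^ (i + 1) ≤ δ * β ^ (C i - 1))
    (S E : Finset G) (hS : S ⊆ E) :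
    (β:ℝ) ^ S.card ≤ (((Adm s T E).image (fun u => u ∩ S)).card : ℝ) := by
  set I := (Adm s T E).image (fun u => u ∩ S) with hIdef
  have hsplitmap : ∀ u ∈ Adm s T E, (u ∩ S, u \ S) ∈ I ×ˢ Adm s T (E \ S) := fun u hu =>
    Finset.mem_product.2 ⟨Finset.mem_image_of_mem _ hu, adm_sdiff hu S⟩
  have hinj : Set.InjOn (fun u => (u ∩ S, u \ S)) ↑(Adm s T E) := by
    intro u _ u' _ heq
    simp only [Prod.mk.injEq] at heq
    ext a
    by_cases haS : a ∈ S
    · have e1 : a ∈ u ↔ a ∈ u ∩ S := by simp [Finset.mem_inter, haS]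
      have e2 : a ∈ u' ↔ a ∈ u' ∩ S := by simp [Finset.mem_inter, haS]
      rw [e1, heq.1, ← e2]
    · have e1 : a ∈ u ↔ a ∈ u \ S := by simp [Finset.mem_sdiff, haS]
      have e2 : a ∈ u' ↔ a ∈ u' \ S := by simp [Finset.mem_sdiff, haS]
      rw [e1, heq.2, ← e2]
  have h1 : (Adm s T E).card ≤ I.card * (Adm s T (E \ S)).card := by
    calc (Adm s T E).card ≤ (I ×ˢ Adm s T (E \ S)).card :=
          Finset.card_le_card_of_injOn _ hsplitmap hinj
      _ = I.card * (Adm s T (E \ S)).card := Finset.card_product _ _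
  have h2 := removal hδ hβδ hβ0 hTcard hTdisj hC1 hC2 S E hS
  have h3 : (0:ℝ) < ((Adm s T (E \ S)).card : ℝ) :=
    Nc_pos hδ hβδ hβ0 hTcard hTdisj hC1 hC2 _
  have h4 : (β:ℝ) ^ S.card * ((Adm s T (E \ S)).card : ℝ)
      ≤ (I.card : ℝ) * ((Adm s T (E \ S)).card : ℝ) := by
    calc (β:ℝ) ^ S.card * ((Adm s T (E \ S)).card : ℝ) ≤ ((Adm s T E).card : ℝ) := h2
      _ ≤ (I.card : ℝ) * ((Adm s T (E \ S)).card : ℝ) := by exact_mod_cast h1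
  exact le_of_mul_le_mul_right h4 h3

lemma isClosed_finDep (E : Finset G) (P : (G → Bool) → Prop)
    (hP : ∀ x y : G → Bool, (∀ g ∈ E, x g = y g) → P x → P y) :
    IsClosed {x : G → Bool | P x} := by
  rw [← isOpen_compl_iff]
  rw [isOpen_iff_mem_nhds]
  intro x hx
  have hopen : IsOpen {y : G → Bool | ∀ g ∈ E, y g = x g} := by
    have he : {y : G → Bool | ∀ g ∈ E, y g = x g} = ⋂ g ∈ E, {y | y g = x g} := by
      ext y; simp
    rw [he]
    refine isOpen_biInter_finset fun g _ => ?_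
    have : {y : G → Bool | y g = x g} = (fun y : G → Bool => y g) ⁻¹' {x g} := by
      ext y; simp
    rw [this]
    exact (isOpen_discrete _).preimage (continuous_apply g)
  refine Filter.mem_of_superset (hopen.mem_nhds (by simp)) ?_
  intro y hy hPy
  exact hx (hP y x hy hPy)

lemma ga_lower [Infinite G] (e : ℕ ≃ G)
    (hδ : 0 < δ) (hβδ : β = 2 - δ) (hβ0 : 0 < β)
    (hTcard : ∀ i, s i ≠ 1 → (T i).card = C i)
    (hTdisj : ∀ i, s i ≠ 1 → ∀ t ∈ T i, s i * t ∉ T i)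
    (hC1 : ∀ i, i + 1 ≤ C i)
    (hC2 : ∀ i, 2 * (C i : ℝ) * 2 ^ (i + 1) ≤ δ * β ^ (C i - 1))
    (S : Finset G) :
    (β:ℝ) ^ S.card ≤ ((globallyAdmissible (FF s T) S).ncard : ℝ) := by
  classical
  set EE : ℕ → Finset G := fun n => ((Finset.range n).image e) ∪ S with hEEdef
  have hSE : ∀ n, S ⊆ EE n := fun n => Finset.subset_union_right
  have hEEmono : ∀ m n, m ≤ n → EE m ⊆ EE n := fun m n hmn =>
    Finset.union_subset_union
      (Finset.image_subset_image (Finset.range_subset_range.2 hmn)) subset_rfl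
  have hEEcover : ∀ A : Finset G, ∃ n, A ⊆ EE n := by
    intro A
    induction A using Finset.induction_on with
    | empty => exact ⟨0, Finset.empty_subset _⟩
    | @insert a A ha ih =>
      obtain ⟨n, hn⟩ := ih
      refine ⟨max n (e.symm a + 1), ?_⟩
      rw [Finset.insert_subset_iff]
      refine ⟨Finset.mem_union_left _ (Finset.mem_image.2 ⟨e.symm a, ?_, e.apply_symm_apply a⟩),
        hn.trans (hEEmono _ _ (le_max_left _ _))⟩
      exact Finset.mem_range.2 (lt_of_lt_of_le (Nat.lt_succ_self _) (le_max_right _ _))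
  set Img : ℕ → Finset (Finset G) := fun n => (Adm s T (EE n)).image (fun u => u ∩ S)
    with hImgdef
  have hImglower : ∀ n, (β:ℝ) ^ S.card ≤ ((Img n).card : ℝ) := fun n =>
    img_lower hδ hβδ hβ0 hTcard hTdisj hC1 hC2 S (EE n) (hSE n)
  have hImgmono : ∀ m n, m ≤ n → Img n ⊆ Img m := by
    intro m n hmn v hv
    obtain ⟨u, hu, rfl⟩ := Finset.mem_image.1 hv
    refine Finset.mem_image.2 ⟨u ∩ EE m, adm_inter hu (hEEmono m n hmn), ?_⟩
    ext a
    simp only [Finset.mem_inter]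
    have : a ∈ S → a ∈ EE m := fun h => hSE m h
    tauto
  have hne : {k | ∃ n, (Img n).card = k}.Nonempty := ⟨(Img 0).card, 0, rfl⟩
  obtain ⟨n₀, hn₀⟩ := Nat.sInf_mem hne
  have hstab : ∀ n, Img n₀ ⊆ Img n := by
    intro n
    rcases le_total n n₀ with h | h
    · exact hImgmono n n₀ h
    · have hsub := hImgmono n₀ n h
      have hcard : (Img n₀).card ≤ (Img n).card := by
        rw [hn₀]; exact Nat.sInf_le ⟨n, rfl⟩
      exact le_of_eq (Finset.eq_of_subset_of_card_le hsub hcard).symm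
  have hGA : ∀ q ∈ Img n₀, ∃ x ∈ shiftSpace (FF s T), ∀ a ∈ S, (x a = true ↔ a ∈ q) := by
    intro q hq
    set W : ℕ → Finset (Finset G) := fun n => (Adm s T (EE n)).filter (fun u => u ∩ S = q)
      with hWdef
    have hWne : ∀ n, (W n).Nonempty := by
      intro n
      obtain ⟨u, hu, huq⟩ := Finset.mem_image.1 (hstab n hq)
      exact ⟨u, Finset.mem_filter.2 ⟨hu, huq⟩⟩
    set Z : ℕ → Set (G → Bool) := fun n => {x | (EE n).filter (fun a => x a = true) ∈ W n}
      with hZdef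
    have hZmono : ∀ n, Z (n+1) ⊆ Z n := by
      intro n x hx
      obtain ⟨hadm, hqq⟩ := Finset.mem_filter.1 hx
      have h2 : ((EE (n+1)).filter (fun a => x a = true)) ∩ EE n
          = (EE n).filter (fun a => x a = true) := by
        ext a
        simp only [Finset.mem_inter, Finset.mem_filter]
        have : a ∈ EE n → a ∈ EE (n+1) := fun h => hEEmono n (n+1) (Nat.le_succ n) h
        tauto
      have h1 : (EE n).filter (fun a => x a = true) ∈ Adm s T (EE n) := by
        rw [← h2]; exact adm_inter hadm (hEEmono n (n+1) (Nat.le_succ n))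
      have h3 : ((EE n).filter (fun a => x a = true)) ∩ S = q := by
        rw [← h2, ← hqq]
        ext a
        simp only [Finset.mem_inter]
        have : a ∈ S → a ∈ EE n := fun h => hSE n h
        tauto
      exact Finset.mem_filter.2 ⟨h1, h3⟩
    have hZne : ∀ n, (Z n).Nonempty := by
      intro n
      obtain ⟨u, hu⟩ := hWne n
      refine ⟨fun a => decide (a ∈ u), ?_⟩
      show (EE n).filter _ ∈ W n
      have heq : (EE n).filter (fun a => (decide (a ∈ u) : Bool) = true) = u := by
        have husub : u ⊆ EE n := (mem_Adm.1 (Finset.mem_filter.1 hu).1).1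
        ext a
        simp only [Finset.mem_filter, decide_eq_true_eq]
        exact ⟨fun h => h.2, fun h => ⟨husub h, h⟩⟩
      rw [heq]
      exact hu
    have hZclosed : ∀ n, IsClosed (Z n) := by
      intro n
      apply isClosed_finDep (EE n)
      intro x y hxy hx
      have heq : (EE n).filter (fun a => y a = true) = (EE n).filter (fun a => x a = true) := by
        apply Finset.filter_congr
        intro a ha
        rw [hxy a ha]
      show (EE n).filter _ ∈ W n
      rw [heq]
      exact hx
    obtain ⟨x, hx⟩ := IsCompact.nonempty_iInter_of_sequence_nonempty_isCompact_isClosed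
      Z hZmono hZne ((hZclosed 0).isCompact) hZclosed
    have hxn : ∀ n, (EE n).filter (fun a => x a = true) ∈ W n := fun n =>
      Set.mem_iInter.1 hx n
    refine ⟨x, ?_, ?_⟩
    · rw [mem_shiftSpace_iff]
      intro i hi g
      obtain ⟨n, hn⟩ := hEEcover ((Dset s T i).image (fun d => g * d))
      have hu := Finset.mem_filter.1 (hxn n)
      obtain ⟨t, ht, hne'⟩ := (mem_Adm.1 hu.1).2 i hi g hn
      refine ⟨t, ht, fun heq => hne' ?_⟩
      have p1 : g * (s i * t) ∈ EE n := hn (pts_mem_image ht g).1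
      have p2 : g * t ∈ EE n := hn (pts_mem_image ht g).2
      constructor
      · intro hm
        have hv := (Finset.mem_filter.1 hm).2
        exact Finset.mem_filter.2 ⟨p2, by rw [← heq]; exact hv⟩
      · intro hm
        have hv := (Finset.mem_filter.1 hm).2
        exact Finset.mem_filter.2 ⟨p1, by rw [heq]; exact hv⟩
    · intro a haS
      have hu := Finset.mem_filter.1 (hxn 0)
      constructor
      · intro hxa
        have h1 : a ∈ (EE 0).filter (fun b => x b = true) :=
          Finset.mem_filter.2 ⟨hSE 0 haS, hxa⟩
        have h2 : a ∈ ((EE 0).filter (fun b => x b = true)) ∩ S :=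
          Finset.mem_inter.2 ⟨h1, haS⟩
        rw [hu.2] at h2
        exact h2
      · intro haq
        have h2 : a ∈ ((EE 0).filter (fun b => x b = true)) ∩ S := by
          rw [hu.2]; exact haq
        exact (Finset.mem_filter.1 (Finset.mem_inter.1 h2).1).2
  set Φ : Finset G → ({g // g ∈ S} → Bool) := fun v => fun a => decide (a.1 ∈ v) with hΦdef
  have hΦmem : ∀ q ∈ Img n₀, Φ q ∈ globallyAdmissible (FF s T) S := by
    intro q hq
    obtain ⟨x, hxX, hxq⟩ := hGA q hq
    refine ⟨x, hxX, 1, ?_⟩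
    intro a
    rw [one_mul]
    have hiff := hxq a.1 a.2
    by_cases hb : a.1 ∈ q
    · simp only [hΦdef, hb, decide_eq_true_eq]
      simp [hiff.2 hb]
    · simp only [hΦdef, hb]
      have : x a.1 ≠ true := fun h => hb (hiff.1 h)
      simp [Bool.not_eq_true] at this
      simp [this]
  have hΦinj : Set.InjOn Φ ↑(Img n₀) := by
    intro v hv v' hv' heq
    have hvS : v ⊆ S := by
      obtain ⟨u, _, rfl⟩ := Finset.mem_image.1 (Finset.mem_coe.1 hv)
      exact Finset.inter_subset_right
    have hvS' : v' ⊆ S := by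
      obtain ⟨u, _, rfl⟩ := Finset.mem_image.1 (Finset.mem_coe.1 hv')
      exact Finset.inter_subset_right
    ext a
    by_cases haS : a ∈ S
    · have h1 := congrFun heq ⟨a, haS⟩
      simp only [hΦdef] at h1
      exact decide_eq_decide.1 h1
    · exact ⟨fun h => absurd (hvS h) haS, fun h => absurd (hvS' h) haS⟩
  have hfin : (globallyAdmissible (FF s T) S).Finite := Set.toFinite _
  have hsubs : (Img n₀).image Φ ⊆ hfin.toFinset := by
    intro p hp
    obtain ⟨q, hq, rfl⟩ := Finset.mem_image.1 hp
    rw [Set.Finite.mem_toFinset]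
    exact hΦmem q hq
  have hcards : (Img n₀).card ≤ hfin.toFinset.card := by
    rw [← Finset.card_image_of_injOn hΦinj]
    exact Finset.card_le_card hsubs
  have hnc : (globallyAdmissible (FF s T) S).ncard = hfin.toFinset.card :=
    Set.ncard_eq_toFinset_card _ hfin
  calc (β:ℝ)^S.card ≤ ((Img n₀).card : ℝ) := hImglower n₀
    _ ≤ _ := by rw [hnc]; exact_mod_cast hcards


end Key

section GA
variable {G : Type*} [Group G]

lemma ga_translate (F : Set (Pattern G Bool)) (S : Finset G) (g : G) :
    (globallyAdmissible F (S.image (fun a => g * a))).ncard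
      = (globallyAdmissible F S).ncard := by
  classical
  have hmem : ∀ a : {h // h ∈ S.image (fun a => g * a)}, g⁻¹ * a.1 ∈ S := by
    intro a
    obtain ⟨b, hb, hba⟩ := Finset.mem_image.1 a.2
    rw [← hba, inv_mul_cancel_left]
    exact hb
  set τ : ({h // h ∈ S} → Bool) → ({h // h ∈ S.image (fun a => g * a)} → Bool) :=
    fun p a => p ⟨g⁻¹ * a.1, hmem a⟩ with hτ
  have hτinj : Function.Injective τ := by
    intro p p' h
    funext a
    have hga : g * a.1 ∈ S.image (fun a => g * a) := Finset.mem_image_of_mem _ a.2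
    have h1 := congrFun h ⟨g * a.1, hga⟩
    simp only [hτ] at h1
    have he : (⟨g⁻¹ * (g * a.1), hmem ⟨g * a.1, hga⟩⟩ : {h // h ∈ S}) = a := by
      apply Subtype.ext
      simp
    rwa [he] at h1
  have himg : τ '' (globallyAdmissible F S) = globallyAdmissible F (S.image (fun a => g * a)) := by
    ext q
    constructor
    · rintro ⟨p, ⟨x, hx, t, ht⟩, rfl⟩
      refine ⟨x, hx, t * g⁻¹, ?_⟩
      intro a
      have h2 := ht ⟨g⁻¹ * a.1, hmem a⟩
      simpa [mul_assoc] using h2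
    · rintro ⟨x, hx, t, ht⟩
      refine ⟨fun b => q ⟨g * b.1, Finset.mem_image_of_mem _ b.2⟩, ⟨x, hx, t * g, ?_⟩, ?_⟩
      · intro b
        have h2 := ht ⟨g * b.1, Finset.mem_image_of_mem _ b.2⟩
        simpa [mul_assoc] using h2
      · funext a
        simp only [hτ]
        congr 1
        exact Subtype.ext (by simp)
  rw [← himg, Set.ncard_image_of_injective _ hτinj]

lemma ga_union_le (F : Set (Pattern G Bool)) (S₁ S₂ : Finset G) :
    (globallyAdmissible F (S₁ ∪ S₂)).ncard
      ≤ (globallyAdmissible F S₁).ncard * (globallyAdmissible F S₂).ncard := by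
  classical
  have h1 : (globallyAdmissible F (S₁ ∪ S₂)).ncard
      ≤ ((globallyAdmissible F S₁) ×ˢ (globallyAdmissible F S₂)).ncard := by
    apply Set.ncard_le_ncard_of_injOn
      (fun q => ((fun a => q ⟨a.1, Finset.mem_union_left _ a.2⟩ :
            {g // g ∈ S₁} → Bool),
          (fun a => q ⟨a.1, Finset.mem_union_right _ a.2⟩ : {g // g ∈ S₂} → Bool)))
      ?_ ?_ (Set.toFinite _)
    · rintro q ⟨x, hx, t, ht⟩
      refine Set.mem_prod.2 ⟨⟨x, hx, t, fun a => ?_⟩, ⟨x, hx, t, fun a => ?_⟩⟩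
      · exact ht ⟨a.1, Finset.mem_union_left _ a.2⟩
      · exact ht ⟨a.1, Finset.mem_union_right _ a.2⟩
    · intro q _ q' _ h
      funext a
      rcases Finset.mem_union.1 a.2 with h1 | h1
      · exact congrFun (congrArg Prod.fst h) ⟨a.1, h1⟩
      · exact congrFun (congrArg Prod.snd h) ⟨a.1, h1⟩
  have h2 : ((globallyAdmissible F S₁) ×ˢ (globallyAdmissible F S₂)).ncard
      = (globallyAdmissible F S₁).ncard * (globallyAdmissible F S₂).ncard := by
    rw [← Nat.card_coe_set_eq, ← Nat.card_coe_set_eq, ← Nat.card_coe_set_eq]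
    rw [Nat.card_congr (Equiv.Set.prod _ _), Nat.card_prod]
  rw [h2] at h1
  exact h1

end GA

lemma nat_24 : ∀ m, 2 ≤ m → 24 * m ≤ 8 ^ m := by
  intro m hm
  induction m with
  | zero => omega
  | succ k ih =>
    rcases Nat.lt_or_ge k 2 with h | h
    · interval_cases k
      · omega
      · norm_num
    · have h8 := ih h
      have hk8 : (8:ℕ) ≤ 8 ^ k := by
        calc (8:ℕ) = 8^1 := by norm_num
          _ ≤ 8^k := Nat.pow_le_pow_right (by norm_num) (by omega)
      calc 24 * (k+1) = 24 * k + 24 := by ring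
        _ ≤ 8^k + 8^k := by omega
        _ ≤ 8 * 8^k := by omega
        _ = 8^(k+1) := by rw [pow_succ]; ring

lemma numeric (δ β : ℝ) (K : ℕ) (hδ : 0 < δ) (hδK : (1:ℝ) ≤ δ * 2^K) (hβ : 3/2 ≤ β)
    (hK : 1 ≤ K) (i : ℕ) :
    2 * ((8*(i+1+K) : ℕ) : ℝ) * 2^(i+1) ≤ δ * β^(8*(i+1+K) - 1) := by
  set m := i + 1 + K with hm
  have hm2 : 2 ≤ m := by omega
  have hpow1 : (2:ℝ)^(4*m) ≤ ((3:ℝ)/2)^(8*m) := by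
    have h16 : (2:ℝ)^4 ≤ ((3:ℝ)/2)^8 := by norm_num
    calc (2:ℝ)^(4*m) = ((2:ℝ)^4)^m := by rw [← pow_mul]
      _ ≤ (((3:ℝ)/2)^8)^m := pow_le_pow_left₀ (by positivity) h16 m
      _ = ((3:ℝ)/2)^(8*m) := by rw [← pow_mul]
  have hβpow : ((3:ℝ)/2)^(8*m-1) ≤ β^(8*m-1) := pow_le_pow_left₀ (by norm_num) hβ _
  have hsplit : ((3:ℝ)/2)^(8*m-1) * (3/2) = (3/2)^(8*m) := by
    rw [← pow_succ]
    congr 1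
    omega
  have h32 : ((3:ℝ)/2)^(8*m-1) = (2/3) * (3/2)^(8*m) := by linarith
  have hb : (2/3) * (2:ℝ)^(4*m) ≤ β^(8*m-1) := by
    calc (2/3) * (2:ℝ)^(4*m) ≤ (2/3) * ((3:ℝ)/2)^(8*m) := by nlinarith
      _ = ((3:ℝ)/2)^(8*m-1) := h32.symm
      _ ≤ β^(8*m-1) := hβpow
  have hδ2 : 1/(2:ℝ)^K ≤ δ := by
    rw [div_le_iff₀ (by positivity)]
    linarith
  have hlhs : (1/(2:ℝ)^K) * ((2/3) * 2^(4*m)) ≤ δ * β^(8*m-1) := by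
    apply mul_le_mul hδ2 hb (by positivity) (le_of_lt hδ)
  have h24 : (24 * m : ℕ) ≤ 8^m := nat_24 m hm2
  have h24' : (24 * (m:ℝ)) ≤ 8^m := by exact_mod_cast h24
  have e1 : (2:ℝ)^(4*m) = 8^m * 2^m := by
    calc (2:ℝ)^(4*m) = 2^(3*m+m) := by congr 1; omega
      _ = 2^(3*m) * 2^m := pow_add _ _ _
      _ = ((2:ℝ)^3)^m * 2^m := by rw [← pow_mul]
      _ = 8^m * 2^m := by norm_num
  have e2 : (2:ℝ)^(i+1) * 2^K = 2^m := by
    rw [← pow_add, hm]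
  have hfin : 2 * ((8*(i+1+K) : ℕ) : ℝ) * 2^(i+1) ≤ (1/(2:ℝ)^K) * ((2/3) * 2^(4*m)) := by
    have hc : 2 * ((8*(i+1+K) : ℕ) : ℝ) * 2^(i+1) = 16 * (m:ℝ) * 2^(i+1) := by
      push_cast [hm]
      ring
    rw [hc, e1]
    have h2K : (0:ℝ) < 2^K := by positivity
    rw [div_mul_eq_mul_div, one_mul, le_div_iff₀ h2K]
    calc 16 * (m:ℝ) * 2^(i+1) * 2^K = (2/3) * (24 * (m:ℝ)) * (2^(i+1) * 2^K) := by ring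
      _ = (2/3) * (24 * (m:ℝ)) * 2^m := by rw [e2]
      _ ≤ (2/3) * (8:ℝ)^m * 2^m := by nlinarith [pow_pos (show (0:ℝ) < 2 by norm_num) m]
      _ = (2/3) * (8^m * 2^m) := by ring
  exact hfin.trans hlhs

end ApAux

/-- Over any infinite countable group there is a strongly aperiodic subshift on the
alphabet `{0,1}` whose growth is at least `2 - ε`. -/
theorem exists_strongly_aperiodic_large_growth {G : Type*} [Group G] [Countable G] [Infinite G]
    (ε : ℝ) (hε : 0 < ε) :
    ∃ F : Set (Pattern G Bool),
      (∀ x ∈ shiftSpace F, ∀ g : G, g ≠ 1 → ∃ h : G, x (g * h) ≠ x h) ∧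
      ∃ α : ℝ, Filter.Tendsto (fun n : ℕ => (globalComplexity F n : ℝ) ^ ((1 : ℝ) / n))
          Filter.atTop (nhds α) ∧ 2 - ε ≤ α := by
  classical
  obtain ⟨dG⟩ := nonempty_denumerable G
  let e : ℕ ≃ G := (Denumerable.eqv G).symm
  set δ : ℝ := min ε 1 / 2 with hδdef
  have hmin : 0 < min ε 1 := lt_min hε one_pos
  have hδ0 : 0 < δ := by rw [hδdef]; linarith
  have hδle : δ ≤ 1/2 := by
    rw [hδdef]
    have := min_le_right ε 1
    linarith
  set β : ℝ := 2 - δ with hβdef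
  have hβ32 : 3/2 ≤ β := by rw [hβdef]; linarith
  have hβ0 : 0 < β := by linarith
  have hβ1 : 1 < β := by linarith
  have hβε : 2 - ε ≤ β := by
    rw [hβdef, hδdef]
    have := min_le_left ε 1
    linarith
  obtain ⟨K₀, hK₀⟩ := pow_unbounded_of_one_lt (1/δ) (by norm_num : (1:ℝ) < 2)
  set K := max K₀ 1 with hKdef
  have hK1 : 1 ≤ K := le_max_right _ _
  have hδK : (1:ℝ) ≤ δ * 2^K := by
    have h1 : (2:ℝ)^K₀ ≤ 2^K := pow_le_pow_right₀ (by norm_num) (le_max_left _ _)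
    have h2 : 1/δ ≤ 2^K := le_trans (le_of_lt hK₀) h1
    rw [div_le_iff₀ hδ0] at h2
    linarith
  set C : ℕ → ℕ := fun i => 8*(i+1+K) with hCdef
  have hC1 : ∀ i, i + 1 ≤ C i := by intro i; show i + 1 ≤ 8*(i+1+K); omega
  have hC2 : ∀ i, 2 * (C i : ℝ) * 2 ^ (i + 1) ≤ δ * β ^ (C i - 1) := fun i =>
    ApAux.numeric δ β K hδ0 hδK hβ32 hK1 i
  set s : ℕ → G := fun i => e i with hsdef
  have hTex : ∀ i, ∃ Ti : Finset G, (s i ≠ 1 → ((Ti.card = C i) ∧ ∀ t ∈ Ti, s i * t ∉ Ti)) := by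
    intro i
    by_cases h : s i = 1
    · exact ⟨∅, fun h' => absurd h h'⟩
    · obtain ⟨Ti, h1, h2⟩ := ApAux.exists_testset (s i) h (C i)
      exact ⟨Ti, fun _ => ⟨h1, h2⟩⟩
  choose T hT using hTex
  have hTcard : ∀ i, s i ≠ 1 → (T i).card = C i := fun i hi => (hT i hi).1
  have hTdisj : ∀ i, s i ≠ 1 → ∀ t ∈ T i, s i * t ∉ T i := fun i hi => (hT i hi).2
  have hβδ : β = 2 - δ := hβdef
  refine ⟨ApAux.FF s T, ?_, ?_⟩
  · -- strong aperiodicity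
    intro x hx g hg
    rw [ApAux.mem_shiftSpace_iff] at hx
    have hi : s (e.symm g) = g := by rw [hsdef]; exact e.apply_symm_apply g
    obtain ⟨t, _, hne⟩ := hx (e.symm g) (by rw [hi]; exact hg) 1
    rw [hi, one_mul, one_mul] at hne
    exact ⟨t, hne⟩
  · -- growth
    set F := ApAux.FF s T with hFdef
    have hGAlow : ∀ S : Finset G, (β:ℝ)^S.card ≤ ((globallyAdmissible F S).ncard : ℝ) :=
      fun S => ApAux.ga_lower e hδ0 hβδ hβ0 hTcard hTdisj hC1 hC2 S
    have hmemn : ∀ n : ℕ, ∃ S : Finset G, S.card = n ∧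
        (globallyAdmissible F S).ncard = globalComplexity F n := by
      intro n
      have hne : {k | ∃ S : Finset G, S.card = n ∧
          (globallyAdmissible F S).ncard = k}.Nonempty := by
        obtain ⟨S, hS⟩ := Infinite.exists_subset_card_eq G n
        exact ⟨_, S, hS, rfl⟩
      exact Nat.sInf_mem hne
    have hcle : ∀ (n : ℕ) (S : Finset G), S.card = n →
        globalComplexity F n ≤ (globallyAdmissible F S).ncard :=
      fun n S hS => Nat.sInf_le ⟨S, hS, rfl⟩
    have hclow : ∀ n : ℕ, (β:ℝ)^n ≤ ((globalComplexity F n : ℕ) : ℝ) := by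
      intro n
      obtain ⟨S, hScard, hSc⟩ := hmemn n
      rw [← hSc, ← hScard]
      exact hGAlow S
    have hc1 : ∀ n, 1 ≤ globalComplexity F n := by
      intro n
      have h1 := hclow n
      have h2 : (1:ℝ) ≤ β^n := one_le_pow₀ (le_of_lt hβ1)
      have : (1:ℝ) ≤ ((globalComplexity F n : ℕ) : ℝ) := le_trans h2 h1
      exact_mod_cast this
    have hsubm : ∀ m n, globalComplexity F (m+n) ≤ globalComplexity F m * globalComplexity F n := by
      intro m n
      obtain ⟨S₁, hS₁card, hS₁⟩ := hmemn m
      obtain ⟨S₂, hS₂card, hS₂⟩ := hmemn n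
      obtain ⟨g, hg⟩ := Infinite.exists_notMem_finset
        (Finset.image₂ (fun a b => a * b⁻¹) S₁ S₂)
      have hdisj : Disjoint S₁ (S₂.image (fun b => g * b)) := by
        rw [Finset.disjoint_left]
        rintro a ha hmem
        obtain ⟨b, hb, hba⟩ := Finset.mem_image.1 hmem
        apply hg
        refine Finset.mem_image₂.2 ⟨a, ha, b, hb, ?_⟩
        rw [← hba]
        group
      have hcard : (S₁ ∪ S₂.image (fun b => g * b)).card = m + n := by
        rw [Finset.card_union_of_disjoint hdisj,
            Finset.card_image_of_injective _ (mul_right_injective g), hS₁card, hS₂card]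
      calc globalComplexity F (m+n)
          ≤ (globallyAdmissible F (S₁ ∪ S₂.image (fun b => g * b))).ncard :=
            hcle _ _ hcard
        _ ≤ (globallyAdmissible F S₁).ncard *
              (globallyAdmissible F (S₂.image (fun b => g * b))).ncard :=
            ApAux.ga_union_le F _ _
        _ = globalComplexity F m * globalComplexity F n := by
            rw [ApAux.ga_translate F S₂ g, hS₁, hS₂]
    set u : ℕ → ℝ := fun n => Real.log (globalComplexity F n) with hudef
    have hcpos : ∀ n, (0:ℝ) < ((globalComplexity F n : ℕ) : ℝ) := by
      intro n
      have := hc1 n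
      exact_mod_cast Nat.lt_of_lt_of_le Nat.zero_lt_one this
    have hu : Subadditive u := by
      intro m n
      rw [hudef]
      have h1 : ((globalComplexity F (m+n) : ℕ) : ℝ)
          ≤ ((globalComplexity F m : ℕ) : ℝ) * ((globalComplexity F n : ℕ) : ℝ) := by
        exact_mod_cast hsubm m n
      calc Real.log (globalComplexity F (m+n))
          ≤ Real.log (((globalComplexity F m : ℕ) : ℝ) * (globalComplexity F n : ℕ)) :=
            Real.log_le_log (hcpos (m+n)) h1
        _ = Real.log (globalComplexity F m) + Real.log (globalComplexity F n) :=
            Real.log_mul (ne_of_gt (hcpos m)) (ne_of_gt (hcpos n))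
    have hlogβ : ∀ n : ℕ, 1 ≤ n → Real.log β ≤ u n / n := by
      intro n hn
      have h1 : (β:ℝ)^n ≤ (globalComplexity F n : ℕ) := hclow n
      have h2 : Real.log (β^n) ≤ Real.log (globalComplexity F n) :=
        Real.log_le_log (pow_pos hβ0 n) h1
      rw [Real.log_pow] at h2
      have hn0 : (0:ℝ) < (n:ℝ) := by exact_mod_cast hn
      rw [hudef, le_div_iff₀ hn0]
      calc Real.log β * n = (n:ℕ) * Real.log β := by ring
        _ ≤ _ := h2
    have hbdd : BddBelow (Set.range fun n : ℕ => u n / n) := by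
      refine ⟨min (Real.log β) 0, ?_⟩
      rintro y ⟨n, rfl⟩
      rcases Nat.eq_zero_or_pos n with rfl | hn
      · simp only [Nat.cast_zero, div_zero]
        exact min_le_right _ _
      · exact le_trans (min_le_left _ _) (hlogβ n hn)
    have htends := hu.tendsto_lim hbdd
    have hlim : Real.log β ≤ hu.lim := by
      rw [Subadditive.lim]
      apply le_csInf
      · exact ⟨u 1 / (1:ℕ), ⟨1, Set.mem_Ici.2 le_rfl, rfl⟩⟩
      · rintro b ⟨n, hn, rfl⟩
        exact hlogβ n (Set.mem_Ici.1 hn)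
    refine ⟨Real.exp hu.lim, ?_, ?_⟩
    · have hcomp : Filter.Tendsto (fun n : ℕ => Real.exp (u n / n)) Filter.atTop
          (nhds (Real.exp hu.lim)) := (Real.continuous_exp.tendsto _).comp htends
      apply hcomp.congr'
      filter_upwards [Filter.eventually_ge_atTop 1] with n hn
      rw [Real.rpow_def_of_pos (hcpos n), hudef, mul_one_div]
    · calc 2 - ε ≤ β := hβε
        _ = Real.exp (Real.log β) := (Real.exp_log hβ0).symm
        _ ≤ Real.exp hu.lim := Real.exp_le_exp.2 hlim
end

section
/- Let G be a group generated by a finite set S with |S| ≥ 2. Then the undirected right Cayley graph of G with respect to S admits a nonrepetitive vertex coloring with 4|S|² + 16|S|^{5/3} colors. -/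
set_option linter.unusedSectionVars false


theorem sum_nx_le (x : ℝ) (h0 : 0 ≤ x) (h1 : x < 1) (M : ℕ) :
    ∑ n ∈ Finset.Icc 1 M, (n : ℝ) * x ^ (n - 1) ≤ ((1 - x)⁻¹) ^ 2 := by
  have hx : (1 : ℝ) - x ≠ 0 := by nlinarith
  have hsum1 : Summable (fun i : ℕ => x ^ i) := summable_geometric_of_lt_one h0 h1
  have hsum2 : Summable (fun i : ℕ => (i : ℝ) * x ^ i) := by
    have := summable_pow_mul_geometric_of_norm_lt_one (R := ℝ) 1
      (r := x) (by rwa [Real.norm_eq_abs, abs_of_nonneg h0])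
    simpa using this
  have hre : ∑ n ∈ Finset.Icc 1 M, (n : ℝ) * x ^ (n - 1)
      = ∑ i ∈ Finset.range M, ((1 : ℝ) + i) * x ^ i := by
    induction M with
    | zero => simp
    | succ m ih =>
      rw [Finset.sum_Icc_succ_top (by omega), Finset.sum_range_succ, ih]
      push_cast
      ring_nf
      congr 1; exact Finset.sum_congr rfl (fun i _ => by ring)
  calc ∑ n ∈ Finset.Icc 1 M, (n : ℝ) * x ^ (n - 1)
      = ∑ i ∈ Finset.range M, (x ^ i + i * x ^ i) := by rw [hre]; congr 1; funext i; ring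
    _ = ∑ i ∈ Finset.range M, x ^ i + ∑ i ∈ Finset.range M, (i : ℝ) * x ^ i := by
        rw [Finset.sum_add_distrib]
    _ ≤ (∑' i : ℕ, x ^ i) + ∑' i : ℕ, (i : ℝ) * x ^ i := by
        gcongr
        · exact Summable.sum_le_tsum _ (fun i _ => by positivity) hsum1
        · exact Summable.sum_le_tsum _ (fun i _ => by positivity) hsum2
    _ = (1 - x)⁻¹ + x / (1 - x) ^ 2 := by
        rw [tsum_geometric_of_lt_one h0 h1, tsum_coe_mul_geometric_of_norm_lt_one
          (by rwa [Real.norm_eq_abs, abs_of_nonneg h0])]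
    _ = ((1 - x)⁻¹) ^ 2 := by field_simp; ring

theorem analytic (s : ℝ) (hs : 2 ≤ s) (M : ℕ) :
    ∑ n ∈ Finset.Icc 1 M, (n : ℝ) * (2*s)^(2*n-1) * ((4*s^2+12*s^((5:ℝ)/3))⁻¹)^(n-1)
      ≤ 4 * s^((5:ℝ)/3) := by
  set u := s ^ ((5:ℝ)/3) with hu
  have hs0 : (0:ℝ) < s := by linarith
  have hu0 : 0 < u := Real.rpow_pos_of_pos hs0 _
  have hus : u ≤ s^2 := by
    calc u ≤ s ^ (2:ℝ) := Real.rpow_le_rpow_of_exponent_le (by linarith) (by norm_num)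
    _ = s^2 := by rw [show (2:ℝ) = ((2:ℕ):ℝ) by norm_num, Real.rpow_natCast]
  have hu3 : u^3 = s^5 := by
    rw [hu, ← Real.rpow_natCast (s ^ ((5:ℝ)/3)) 3, ← Real.rpow_mul hs0.le]
    norm_num
  set β : ℝ := 4*s^2 + 12*u with hβ
  have hβ0 : 0 < β := by nlinarith
  set x : ℝ := 4*s^2 / β with hxd
  have hx0 : 0 ≤ x := by positivity
  have hx1 : x < 1 := by rw [hxd, div_lt_one hβ0]; nlinarith
  have h1x : 1 - x = 12*u/β := by rw [hxd]; field_simp; ring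
  have hterm : ∀ n ∈ Finset.Icc 1 M,
      (n:ℝ) * (2*s)^(2*n-1) * (β⁻¹)^(n-1) = 2*s*((n:ℝ)*x^(n-1)) := by
    intro n hn
    have hn1 : 1 ≤ n := (Finset.mem_Icc.1 hn).1
    have h2 : 2*n-1 = 2*(n-1)+1 := by omega
    have h4 : ((2*s)^2 : ℝ) = 4*s^2 := by ring
    calc (n:ℝ) * (2*s)^(2*n-1) * (β⁻¹)^(n-1)
        = (n:ℝ) * (((2*s)^2)^(n-1) * (2*s)) * (β⁻¹)^(n-1) := by rw [h2, pow_succ, pow_mul]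
      _ = 2*s*((n:ℝ)*((4*s^2)^(n-1) * (β⁻¹)^(n-1))) := by rw [h4]; ring
      _ = 2*s*((n:ℝ)*x^(n-1)) := by
          have hxp : x^(n-1) = (4*s^2)^(n-1) * (β⁻¹)^(n-1) := by
            rw [hxd, div_eq_mul_inv]; exact mul_pow _ _ _
          rw [hxp]
  rw [Finset.sum_congr rfl hterm, ← Finset.mul_sum]
  have hb : 2*s * ∑ n ∈ Finset.Icc 1 M, (n:ℝ)*x^(n-1) ≤ 2*s * ((1-x)⁻¹)^2 :=
    mul_le_mul_of_nonneg_left (sum_nx_le x hx0 hx1 M) (by positivity)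
  refine hb.trans ?_
  have hinv : ((1-x)⁻¹)^2 = β^2/(144*u^2) := by
    rw [h1x]
    rw [inv_div, div_pow]
    congr 1 <;> ring
  rw [hinv, mul_div_assoc']
  rw [div_le_iff₀ (by positivity)]
  have hβsq : β ≤ 16*s^2 := by nlinarith
  have h1 : 2*s*(β*β) ≤ 2*s*((16*s^2)*(16*s^2)) := by
    apply mul_le_mul_of_nonneg_left _ (by positivity)
    exact mul_le_mul hβsq hβsq hβ0.le (by positivity)
  nlinarith [h1, hu3, mul_pos hu0 hu0, mul_pos (mul_pos hu0 hu0) hu0]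

namespace CayleyNR

variable {G : Type*} [Group G] [DecidableEq G]

/-- A repetitive pattern for coloring `c`, supported on vertices satisfying `P`. -/
def RepPat (S : Finset G) {N : ℕ} (P : G → Prop) (c : G → Fin N) (n : ℕ) (v : ℕ → G) : Prop :=
  1 ≤ n ∧ (∀ i < 2 * n, P (v i)) ∧
  (∀ i j, i < 2 * n → j < 2 * n → i ≠ j → v i ≠ v j) ∧
  (∀ i, i + 1 < 2 * n → ∃ t ∈ S, v i * t = v (i + 1) ∨ v (i + 1) * t = v i) ∧
  (∀ i < n, c (v i) = c (v (n + i)))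

def Good (S : Finset G) {N : ℕ} (P : G → Prop) (c : G → Fin N) : Prop :=
  ¬ ∃ n v, RepPat S P c n v

variable {S : Finset G} {N : ℕ} {P Q : G → Prop} {c c' : G → Fin N} {n : ℕ} {v v' : ℕ → G}

theorem RepPat.mono (h : ∀ g, P g → Q g) (hp : RepPat S P c n v) : RepPat S Q c n v :=
  ⟨hp.1, fun i hi => h _ (hp.2.1 i hi), hp.2.2⟩

theorem RepPat.congr_color (h : ∀ g, P g → c g = c' g) (hp : RepPat S P c n v) :
    RepPat S P c' n v := by
  obtain ⟨h1, h2, h3, h4, h5⟩ := hp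
  refine ⟨h1, h2, h3, h4, fun i hi => ?_⟩
  rw [← h _ (h2 i (by omega)), ← h _ (h2 (n + i) (by omega))]
  exact h5 i hi

theorem RepPat.of_congr_v (h : ∀ j < 2 * n, v j = v' j) (hp : RepPat S P c n v) :
    RepPat S P c n v' := by
  obtain ⟨h1, h2, h3, h4, h5⟩ := hp
  refine ⟨h1, fun i hi => h i hi ▸ h2 i hi, fun i j hi hj hij => ?_, fun i hi => ?_, fun i hi => ?_⟩
  · rw [← h i hi, ← h j hj]; exact h3 i j hi hj hij
  · rw [← h i (by omega), ← h (i+1) hi]; exact h4 i hi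
  · rw [← h i (by omega), ← h (n+i) (by omega)]; exact h5 i hi

theorem RepPat.reverse (hp : RepPat S P c n v) :
    RepPat S P c n (fun j => v (2 * n - 1 - j)) := by
  obtain ⟨h1, h2, h3, h4, h5⟩ := hp
  refine ⟨h1, fun i hi => h2 _ (by omega), fun i j hi hj hij => h3 _ _ (by omega) (by omega)
    (by omega), fun i hi => ?_, fun i hi => ?_⟩
  · obtain ⟨t, ht, hor⟩ := h4 (2 * n - 2 - i) (by omega)
    have e1 : 2 * n - 2 - i + 1 = 2 * n - 1 - i := by omega
    have e2 : 2 * n - 1 - (i + 1) = 2 * n - 2 - i := by omega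
    rw [e1] at hor
    refine ⟨t, ht, ?_⟩
    simp only [e2]
    tauto
  · have e1 : 2 * n - 1 - i = n + (n - 1 - i) := by omega
    have e2 : 2 * n - 1 - (n + i) = n - 1 - i := by omega
    simp only [e1, e2]
    exact (h5 (n - 1 - i) (by omega)).symm

theorem Good.mono (h : ∀ g, P g → Q g) (hg : Good S Q c) : Good S P c :=
  fun ⟨n, v, hp⟩ => hg ⟨n, v, hp.mono h⟩

theorem Good.congr (h : ∀ g, P g → c g = c' g) (hg : Good S P c) : Good S P c' :=
  fun ⟨n, v, hp⟩ => hg ⟨n, v, hp.congr_color (fun g hgp => (h g hgp).symm)⟩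

variable (S N) in
/-- Colorings supported on `U` that are nonrepetitive on `U`. -/
def NRset [NeZero N] (U : Finset G) : Set (G → Fin N) :=
  {f | (∀ g, g ∉ U → f g = default) ∧ Good S (· ∈ U) f}

variable [NeZero N]

theorem NRset_finite (U : Finset G) : (NRset S N U).Finite := by
  have h : Set.InjOn (fun (f : G → Fin N) => (fun u : ↥U => f u)) (NRset S N U) := by
    intro f1 h1 f2 h2 he
    funext g
    by_cases hg : g ∈ U
    · exact congrFun he ⟨g, hg⟩
    · rw [h1.1 g hg, h2.1 g hg]
  exact Set.Finite.of_finite_image (Set.toFinite _) h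

variable (S N) in
noncomputable def nr (U : Finset G) : ℕ := (NRset S N U).ncard

theorem nr_empty : nr S N (∅ : Finset G) = 1 := by
  have : NRset S N (∅ : Finset G) = {fun _ => default} := by
    ext f
    simp only [NRset, Set.mem_setOf_eq, Set.mem_singleton_iff]
    constructor
    · rintro ⟨h1, -⟩
      funext g; exact h1 g (Finset.notMem_empty g)
    · rintro rfl
      refine ⟨fun _ _ => rfl, ?_⟩
      rintro ⟨n, v, hp⟩
      exact Finset.notMem_empty (v 0) (hp.2.1 0 (by have := hp.1; omega))
  rw [nr, this, Set.ncard_singleton]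


theorem ncard_biUnion_le {α ι : Type*} (s : Finset ι) (t : ι → Set α)
    (ht : ∀ i ∈ s, (t i).Finite) : (⋃ i ∈ s, t i).ncard ≤ ∑ i ∈ s, (t i).ncard := by
  classical
  induction s using Finset.induction_on with
  | empty => simp
  | insert a s' hx ih =>
    rw [Finset.sum_insert hx]
    have he : (⋃ i ∈ insert a s', t i) = t a ∪ ⋃ i ∈ s', t i := by
      simp [Set.biUnion_insert]
    rw [he]
    exact (Set.ncard_union_le _ _).trans
      (add_le_add le_rfl (ih (fun i hi => ht i (Finset.mem_insert_of_mem hi))))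

theorem supported_finite (N : ℕ) [NeZero N] (V : Finset G) :
    {f : G → Fin N | ∀ g, g ∉ V → f g = default}.Finite := by
  have h : Set.InjOn (fun (f : G → Fin N) => (fun u : ↥V => f u))
      {f : G → Fin N | ∀ g, g ∉ V → f g = default} := by
    intro f1 h1 f2 h2 he
    funext g
    by_cases hg : g ∈ V
    · exact congrFun he ⟨g, hg⟩
    · rw [h1 g hg, h2 g hg]
  exact Set.Finite.of_finite_image (Set.toFinite _) h

/-- The path through `x` at position `k` with increments `w`. -/
def pv (x : G) (k : ℕ) (w : ℕ → G) (j : ℕ) : G :=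
  x * ((List.range k).map w).prod⁻¹ * ((List.range j).map w).prod

theorem pv_self (x : G) (k : ℕ) (w : ℕ → G) : pv x k w k = x := by
  simp [pv, mul_assoc]

theorem pv_eq (x : G) (k : ℕ) (w v : ℕ → G) (n : ℕ) (hk : k < 2 * n) (hvk : v k = x)
    (hw : ∀ i, i < 2 * n - 1 → w i = (v i)⁻¹ * v (i + 1)) :
    ∀ j < 2 * n, pv x k w j = v j := by
  have key : ∀ j, j < 2 * n → v j = v 0 * ((List.range j).map w).prod := by
    intro j
    induction j with
    | zero => simp
    | succ j ihj =>
      intro hj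
      have hvj : v (j + 1) = v j * w j := by
        rw [hw j (by omega), mul_inv_cancel_left]
      rw [hvj, ihj (by omega), List.range_succ, List.map_append, List.prod_append]
      simp [mul_assoc]
  intro j hj
  have h0 : x * ((List.range k).map w).prod⁻¹ = v 0 := by
    rw [← hvk, key k hk, mul_inv_cancel_right]
  rw [pv, h0, ← key j hj]

/-- Finitely many possible increment sequences. -/
noncomputable def Wfin (S : Finset G) (n : ℕ) : Finset (ℕ → G) :=
  @Finset.image _ _ (Classical.decEq _)
    (fun p i => if h : i ∈ Finset.range (2 * n - 1) then p i h else 1)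
    ((Finset.range (2 * n - 1)).pi (fun _ => S ∪ S.image (·⁻¹)))

theorem Wfin_card (S : Finset G) (n : ℕ) :
    (Wfin S n).card ≤ (2 * S.card) ^ (2 * n - 1) := by
  rw [Wfin]
  refine le_trans (@Finset.card_image_le _ _ _ _ (Classical.decEq _)) ?_
  rw [Finset.card_pi, Finset.prod_const, Finset.card_range]
  have h1 : (S ∪ S.image (·⁻¹)).card ≤ 2 * S.card := by
    refine (Finset.card_union_le _ _).trans ?_
    rw [two_mul]
    exact Nat.add_le_add le_rfl Finset.card_image_le
  exact Nat.pow_le_pow_left h1 _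


theorem step_main (S : Finset G) (N : ℕ) [NeZero N] (hS : 2 ≤ S.card)
    (hN : 4 * (S.card : ℝ) ^ 2 + 16 * (S.card : ℝ) ^ ((5 : ℝ) / 3) ≤ N) :
    ∀ (m : ℕ) (U : Finset G), U.card ≤ m → ∀ x ∉ U,
      (4 * (S.card : ℝ) ^ 2 + 12 * (S.card : ℝ) ^ ((5 : ℝ) / 3)) * nr S N U
        ≤ nr S N (insert x U) := by
  set sR : ℝ := (S.card : ℝ) with hsR
  have hs2 : (2 : ℝ) ≤ sR := by rw [hsR]; exact_mod_cast hS
  set B : ℝ := 4 * sR ^ 2 + 12 * sR ^ ((5 : ℝ) / 3) with hB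
  have hu0 : 0 < sR ^ ((5 : ℝ) / 3) := Real.rpow_pos_of_pos (by linarith) _
  have hB1 : (1 : ℝ) ≤ B := by rw [hB]; nlinarith
  have hB0 : (0 : ℝ) < B := by linarith
  clear_value B sR
  intro m
  induction m using Nat.strong_induction_on with
  | _ m IH =>
  intro U hU x hx
  -- the chain lemma for subsets, via the inductive hypothesis
  have chain : ∀ (k : ℕ) (U₂ U₁ : Finset G), U₁ ⊆ U₂ → U₂ ⊆ U → U₂.card ≤ U₁.card + k →
      B ^ (U₂.card - U₁.card) * nr S N U₁ ≤ nr S N U₂ := by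
    intro k
    induction k with
    | zero =>
      intro U₂ U₁ h12 h2U hk
      have he : U₁ = U₂ := Finset.eq_of_subset_of_card_le h12 (by omega)
      subst he
      simp
    | succ k ihk =>
      intro U₂ U₁ h12 h2U hk
      by_cases hc : U₂.card ≤ U₁.card + k
      · exact ihk U₂ U₁ h12 h2U hc
      · have hlt : U₁.card < U₂.card := by omega
        obtain ⟨y, hy2, hy1⟩ : ∃ y ∈ U₂, y ∉ U₁ := by
          by_contra h
          push_neg at h
          have := Finset.card_le_card (fun z hz => h z hz)
          omega
        set W := U₂.erase y with hW
        have hW2 : W ⊆ U₂ := Finset.erase_subset _ _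
        have h1W : U₁ ⊆ W := fun z hz =>
          Finset.mem_erase.2 ⟨fun h => hy1 (h ▸ hz), h12 hz⟩
        have hWcard : W.card + 1 = U₂.card := Finset.card_erase_add_one hy2
        have hm1 : 1 ≤ m := by
          have h1 := Finset.card_le_card h2U
          omega
        have hstep : B * nr S N W ≤ nr S N (insert y W) := by
          refine IH (m - 1) (by omega) W ?_ y (Finset.notMem_erase _ _)
          have h1 := Finset.card_le_card h2U
          omega
        have hins : insert y W = U₂ := Finset.insert_erase hy2
        have hih := ihk W U₁ h1W (hW2.trans h2U) (by omega)
        have hcc := Finset.card_le_card h1W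
        calc B ^ (U₂.card - U₁.card) * nr S N U₁
            = B * (B ^ (W.card - U₁.card) * nr S N U₁) := by
              rw [← mul_assoc, ← pow_succ']
              congr 2
              omega
          _ ≤ B * nr S N W := mul_le_mul_of_nonneg_left hih hB0.le
          _ ≤ nr S N (insert y W) := hstep
          _ = nr S N U₂ := by rw [hins]
  classical
  set M := U.card + 1 with hMdef
  set E : Set (G → Fin N) :=
    {f | (∀ g, g ∉ insert x U → f g = default) ∧ Good S (· ∈ U) f} with hE
  have hEfin : E.Finite := (supported_finite N (insert x U)).subset (fun f hf => hf.1)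
  have hcardE : E.ncard = N * nr S N U := by
    have hmem1 : ∀ f ∈ E, Function.update f x default ∈ NRset S N U := by
      intro f hf
      rw [hE] at hf
      obtain ⟨hsup, hgood⟩ := hf
      constructor
      · intro g hg
        by_cases hgx : g = x
        · subst hgx; simp
        · rw [Function.update_of_ne hgx]
          exact hsup g (by simp [Finset.mem_insert, hgx, hg])
      · exact hgood.congr fun g hgU =>
          (Function.update_of_ne (fun h => hx (by rw [← h]; exact hgU)) _ _).symm
    have hmem2 : ∀ (h : G → Fin N), h ∈ NRset S N U → ∀ a : Fin N,
        Function.update h x a ∈ E := by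
      intro h hh a
      obtain ⟨hsup, hgood⟩ := hh
      rw [hE]
      constructor
      · intro g hg
        have hgx : g ≠ x := fun e => hg (e ▸ Finset.mem_insert_self x U)
        rw [Function.update_of_ne hgx]
        exact hsup g (fun hgU => hg (Finset.mem_insert_of_mem hgU))
      · exact hgood.congr fun g hgU =>
          (Function.update_of_ne (fun e => hx (by rw [← e]; exact hgU)) _ _).symm
    have hF : Function.Bijective (fun f : ↥E =>
        ((⟨Function.update f.1 x default, hmem1 f.1 f.2⟩ : ↥(NRset S N U)), f.1 x)) := by
      constructor
      · rintro ⟨f1, hf1⟩ ⟨f2, hf2⟩ hfe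
        simp only [Prod.mk.injEq, Subtype.mk.injEq] at hfe
        obtain ⟨h1, h2⟩ := hfe
        apply Subtype.ext
        funext g
        by_cases hgx : g = x
        · subst hgx; exact h2
        · have := congrFun h1 g
          rwa [Function.update_of_ne hgx, Function.update_of_ne hgx] at this
      · rintro ⟨⟨h, hh⟩, a⟩
        refine ⟨⟨Function.update h x a, hmem2 h hh a⟩, ?_⟩
        have hhx : h x = default := hh.1 x hx
        simp only [Prod.mk.injEq, Subtype.mk.injEq]
        constructor
        · rw [Function.update_idem, ← hhx, Function.update_eq_self]
        · rw [Function.update_self]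
    have h1 : Nat.card ↥E = Nat.card (↥(NRset S N U) × Fin N) :=
      Nat.card_congr (Equiv.ofBijective _ hF)
    rw [Nat.card_prod, Nat.card_coe_set_eq, Nat.card_coe_set_eq,
      Nat.card_eq_fintype_card, Fintype.card_fin] at h1
    rw [h1, nr, mul_comm]
  set Bad : Set (G → Fin N) :=
    {f | f ∈ E ∧ ∃ n v, RepPat S (· ∈ insert x U) f n v} with hBadDef
  have hBadsub : Bad ⊆ E := fun f hf => hf.1
  have hBadfin : Bad.Finite := hEfin.subset hBadsub
  have hNReq : NRset S N (insert x U) = E \ Bad := by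
    ext f
    simp only [NRset, Set.mem_setOf_eq, hE, hBadDef, Set.mem_diff, Set.mem_setOf_eq]
    constructor
    · rintro ⟨hsup, hgood⟩
      have hgU : Good S (· ∈ U) f := hgood.mono (fun g hg => Finset.mem_insert_of_mem hg)
      exact ⟨⟨hsup, hgU⟩, fun hbad => hgood hbad.2⟩
    · rintro ⟨⟨hsup, hgood⟩, hnb⟩
      exact ⟨hsup, fun hex => hnb ⟨⟨hsup, hgood⟩, hex⟩⟩
  have hcard1 : (nr S N (insert x U) : ℝ) = (E.ncard : ℝ) - (Bad.ncard : ℝ) := by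
    rw [nr, hNReq, Set.ncard_diff hBadsub hBadfin,
      Nat.cast_sub (Set.ncard_le_ncard hBadsub hEfin)]
  set Bd : ℕ → ℕ → (ℕ → G) → Set (G → Fin N) :=
    fun n k w => {f | f ∈ E ∧ RepPat S (· ∈ insert x U) f n (pv x k w)} with hBdDef
  have hBdsub : ∀ n k w, Bd n k w ⊆ E := fun n k w f hf => hf.1
  have hcover : Bad ⊆ ⋃ n ∈ Finset.Icc 1 M, ⋃ k ∈ Finset.range n, ⋃ w ∈ Wfin S n,
      Bd n k w := by
    intro f hf
    obtain ⟨hfE, n, v, hp⟩ := hf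
    have hxocc : ∃ j, j < 2 * n ∧ v j = x := by
      by_contra h
      push_neg at h
      refine hfE.2 ⟨n, v, hp.1, ?_, hp.2.2⟩
      intro i hi
      rcases Finset.mem_insert.1 (hp.2.1 i hi) with h1 | h1
      · exact absurd h1 (h i hi)
      · exact h1
    obtain ⟨j0, hj0, hvj0⟩ := hxocc
    obtain ⟨v2, hp2, k, hk, hvk⟩ :
        ∃ v2, RepPat S (· ∈ insert x U) f n v2 ∧ ∃ k, k < n ∧ v2 k = x := by
      rcases lt_or_ge j0 n with h | h
      · exact ⟨v, hp, j0, h, hvj0⟩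
      · refine ⟨_, hp.reverse, 2*n-1-j0, by have := hp.1; omega, ?_⟩
        show v (2*n-1-(2*n-1-j0)) = x
        rw [show 2*n-1-(2*n-1-j0) = j0 by omega]
        exact hvj0
    have hn1 : 1 ≤ n := hp2.1
    have hnM : n ∈ Finset.Icc 1 M := by
      have hinj : Set.InjOn v2 ↑(Finset.range (2*n)) := by
        intro i hi j hj he
        by_contra hne
        exact hp2.2.2.1 i j (Finset.mem_range.1 hi) (Finset.mem_range.1 hj) hne he
      have hcle := Finset.card_le_card_of_injOn v2
        (fun i hi => hp2.2.1 i (Finset.mem_range.1 hi)) hinj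
      rw [Finset.card_range, Finset.card_insert_of_notMem hx] at hcle
      exact Finset.mem_Icc.2 ⟨hn1, by omega⟩
    set w : ℕ → G :=
      fun i => if h : i ∈ Finset.range (2*n-1) then (v2 i)⁻¹ * v2 (i+1) else 1 with hwdef
    have hwW : w ∈ Wfin S n := by
      rw [Wfin]
      refine Finset.mem_image.2 ⟨fun i _ => (v2 i)⁻¹ * v2 (i+1), ?_, by rw [hwdef]⟩
      refine Finset.mem_pi.2 ?_
      intro i hi
      have hi' := Finset.mem_range.1 hi
      obtain ⟨t, ht, hor⟩ := hp2.2.2.2.1 i (by omega)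
      rcases hor with h | h
      · have he : (v2 i)⁻¹ * v2 (i+1) = t := by rw [← h]; group
        rw [he]; exact Finset.mem_union_left _ ht
      · have he : (v2 i)⁻¹ * v2 (i+1) = t⁻¹ := by rw [← h]; group
        rw [he]
        exact Finset.mem_union_right _ (Finset.mem_image.2 ⟨t, ht, rfl⟩)
    have hpveq : ∀ j < 2*n, pv x k w j = v2 j := by
      refine pv_eq x k w v2 n (by omega) hvk ?_
      intro i hi
      simp only [hwdef]
      rw [dif_pos (Finset.mem_range.2 hi)]
    have hrep : RepPat S (· ∈ insert x U) f n (pv x k w) :=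
      hp2.of_congr_v (fun j hj => (hpveq j hj).symm)
    exact Set.mem_iUnion₂.2 ⟨n, hnM, Set.mem_iUnion₂.2 ⟨k, Finset.mem_range.2 hk,
      Set.mem_iUnion₂.2 ⟨w, hwW, ⟨hfE, hrep⟩⟩⟩⟩
  have hper : ∀ n k (w : ℕ → G), 1 ≤ n → k < n →
      ((Bd n k w).ncard : ℝ) ≤ (nr S N U : ℝ) * (B⁻¹) ^ (n - 1) := by
    intro n k w hn1 hkn
    rcases Set.eq_empty_or_nonempty (Bd n k w) with he | ⟨f0, hf0⟩
    · rw [he]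
      simp only [Set.ncard_empty, Nat.cast_zero]
      positivity
    · obtain ⟨hf0E, hf0p⟩ := hf0
      set p : ℕ → G := pv x k w with hpdef
      have hdist := hf0p.2.2.1
      have hmem := hf0p.2.1
      have hpk : p k = x := pv_self x k w
      set FH : Finset G := (Finset.range n).image p with hFH
      have hFHcard : FH.card = n := by
        rw [hFH, Finset.card_image_of_injOn, Finset.card_range]
        intro i hi j hj he
        by_contra hne
        exact hdist i j (by have := Finset.mem_range.1 hi; omega)
          (by have := Finset.mem_range.1 hj; omega) hne he
      have hxFH : x ∈ FH := by
        rw [hFH]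
        exact Finset.mem_image.2 ⟨k, Finset.mem_range.2 hkn, hpk⟩
      have hUFH : U ∩ FH = FH.erase x := by
        ext y
        simp only [Finset.mem_inter, Finset.mem_erase]
        constructor
        · rintro ⟨hyU, hyFH⟩
          exact ⟨fun he => hx (by rw [← he]; exact hyU), hyFH⟩
        · rintro ⟨hyx, hyFH⟩
          refine ⟨?_, hyFH⟩
          obtain ⟨j, hj, hjy⟩ := Finset.mem_image.1 (by rwa [hFH] at hyFH)
          have hj' := Finset.mem_range.1 hj
          rcases Finset.mem_insert.1 (hmem j (by omega)) with h1 | h1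
          · rw [hjy] at h1
            exact absurd h1 hyx
          · rw [← hjy]; exact h1
      have hcFH : (FH.erase x).card = n - 1 := by
        rw [Finset.card_erase_of_mem hxFH, hFHcard]
      have hcsd : (U \ FH).card + (n-1) = U.card := by
        have h1 := Finset.card_sdiff_add_card_inter U FH
        rw [hUFH, hcFH] at h1
        exact h1
      set Φ : (G → Fin N) → (G → Fin N) :=
        fun f => fun y => if y ∈ FH then default else f y with hΦ
      have hmapsto : ∀ f ∈ Bd n k w, Φ f ∈ NRset S N (U \ FH) := by
        intro f hf
        obtain ⟨hfE, hfp⟩ := hf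
        constructor
        · intro g hg
          simp only [hΦ]
          by_cases hgFH : g ∈ FH
          · rw [if_pos hgFH]
          · rw [if_neg hgFH]
            have hgU : g ∉ U := fun hgU => hg (Finset.mem_sdiff.2 ⟨hgU, hgFH⟩)
            have hgx : g ≠ x := fun he => hgFH (by rw [he]; exact hxFH)
            exact hfE.1 g (fun hgi => (Finset.mem_insert.1 hgi).elim hgx hgU)
        · have hgood : Good S (· ∈ U \ FH) f :=
            (hfE.2).mono (fun g hg => (Finset.mem_sdiff.1 hg).1)
          refine hgood.congr ?_
          intro g hg
          simp only [hΦ]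
          rw [if_neg (Finset.mem_sdiff.1 hg).2]
      have hinjon : Set.InjOn Φ (Bd n k w) := by
        rintro f1 ⟨h1E, h1p⟩ f2 ⟨h2E, h2p⟩ he
        funext y
        by_cases hy : y ∈ FH
        · obtain ⟨j, hj, hjy⟩ := Finset.mem_image.1 (by rwa [hFH] at hy)
          have hjn := Finset.mem_range.1 hj
          have hnot : p (n + j) ∉ FH := by
            intro hmem'
            obtain ⟨j', hj', hj'e⟩ := Finset.mem_image.1 (by rwa [hFH] at hmem')
            have hj'n := Finset.mem_range.1 hj'
            exact hdist (n+j) j' (by omega) (by omega) (by omega) hj'e.symm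
          have hcong := congrFun he (p (n + j))
          simp only [hΦ, if_neg hnot] at hcong
          have e1 : f1 y = f1 (p (n + j)) := by
            rw [← hjy]; exact h1p.2.2.2.2 j hjn
          have e2 : f2 y = f2 (p (n + j)) := by
            rw [← hjy]; exact h2p.2.2.2.2 j hjn
          rw [e1, e2, hcong]
        · have hcong := congrFun he y
          simp only [hΦ, if_neg hy] at hcong
          exact hcong
      have hle1 : (Bd n k w).ncard ≤ nr S N (U \ FH) := by
        rw [← Set.ncard_image_of_injOn hinjon]
        exact Set.ncard_le_ncard (Set.image_subset_iff.2 hmapsto) (NRset_finite _)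
      have hch := chain U.card U (U \ FH) (Finset.sdiff_subset) (subset_refl U) (by omega)
      have hexp : U.card - (U \ FH).card = n - 1 := by omega
      rw [hexp] at hch
      have hB1n : (0:ℝ) < B ^ (n-1) := pow_pos hB0 _
      have h2 : (nr S N (U \ FH) : ℝ) ≤ (nr S N U : ℝ) * (B⁻¹)^(n-1) := by
        rw [inv_pow, ← div_eq_mul_inv]
        refine (le_div_iff₀ hB1n).2 ?_
        rw [mul_comm]
        exact hch
      exact le_trans (by exact_mod_cast hle1) h2
  have hBadcard : (Bad.ncard : ℝ) ≤
      (∑ n ∈ Finset.Icc 1 M, (n : ℝ) * (2 * sR) ^ (2 * n - 1) * (B⁻¹) ^ (n - 1))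
        * nr S N U := by
    have hfinBd : ∀ n k w, (Bd n k w).Finite := fun n k w => hEfin.subset (hBdsub n k w)
    have hfin2 : ∀ n, (⋃ k ∈ Finset.range n, ⋃ w ∈ Wfin S n, Bd n k w).Finite :=
      fun n => (Finset.range n).finite_toSet.biUnion
        (fun k _ => (Wfin S n).finite_toSet.biUnion (fun w _ => hfinBd n k w))
    have hstep1 : Bad.ncard ≤ ∑ n ∈ Finset.Icc 1 M, ∑ k ∈ Finset.range n,
        ∑ w ∈ Wfin S n, (Bd n k w).ncard := by
      refine le_trans (Set.ncard_le_ncard hcover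
        ((Finset.Icc 1 M).finite_toSet.biUnion (fun n _ => hfin2 n))) ?_
      refine le_trans (ncard_biUnion_le _ _ (fun n _ => hfin2 n)) ?_
      refine Finset.sum_le_sum ?_
      intro n _
      refine le_trans (ncard_biUnion_le _ _ (fun k _ =>
        (Wfin S n).finite_toSet.biUnion (fun w _ => hfinBd n k w))) ?_
      refine Finset.sum_le_sum ?_
      intro k _
      exact ncard_biUnion_le _ _ (fun w _ => hfinBd n k w)
    have hsum1 : (Bad.ncard : ℝ) ≤ ∑ n ∈ Finset.Icc 1 M, ∑ k ∈ Finset.range n,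
        ∑ w ∈ Wfin S n, ((Bd n k w).ncard : ℝ) := by
      refine le_trans (Nat.cast_le.2 hstep1) (le_of_eq ?_)
      push_cast
      rfl
    refine hsum1.trans ?_
    have hterm : ∀ n ∈ Finset.Icc 1 M, ∑ k ∈ Finset.range n, ∑ w ∈ Wfin S n,
        ((Bd n k w).ncard : ℝ) ≤ (n:ℝ) * (2*sR)^(2*n-1) * (B⁻¹)^(n-1) * nr S N U := by
      intro n hn
      obtain ⟨hn1, -⟩ := Finset.mem_Icc.1 hn
      have hbpos : (0:ℝ) ≤ (nr S N U : ℝ) * (B⁻¹)^(n-1) :=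
        mul_nonneg (Nat.cast_nonneg _) (le_of_lt (pow_pos (inv_pos.2 hB0) _))
      have hinner : ∀ k ∈ Finset.range n, ∑ w ∈ Wfin S n, ((Bd n k w).ncard : ℝ)
          ≤ ((Wfin S n).card : ℝ) * ((nr S N U : ℝ) * (B⁻¹)^(n-1)) := by
        intro k hk
        refine le_trans (Finset.sum_le_sum
          (g := fun _ => (nr S N U : ℝ) * (B⁻¹)^(n-1))
          (fun w _ => hper n k w hn1 (Finset.mem_range.1 hk))) ?_
        rw [Finset.sum_const, nsmul_eq_mul]
      refine le_trans (Finset.sum_le_sum hinner) ?_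
      rw [Finset.sum_const, Finset.card_range, nsmul_eq_mul]
      have hW : ((Wfin S n).card : ℝ) ≤ (2*sR)^(2*n-1) := by
        refine le_trans (Nat.cast_le.2 (Wfin_card S n)) (le_of_eq ?_)
        rw [hsR]
        push_cast
        ring
      calc (n:ℝ) * (((Wfin S n).card : ℝ) * ((nr S N U : ℝ) * (B⁻¹)^(n-1)))
          ≤ (n:ℝ) * ((2*sR)^(2*n-1) * ((nr S N U : ℝ) * (B⁻¹)^(n-1))) :=
            mul_le_mul_of_nonneg_left (mul_le_mul_of_nonneg_right hW hbpos)
              (Nat.cast_nonneg _)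
        _ = (n:ℝ) * (2*sR)^(2*n-1) * (B⁻¹)^(n-1) * nr S N U := by ring
    refine le_trans (Finset.sum_le_sum hterm) (le_of_eq ?_)
    rw [← Finset.sum_mul]
  have hana := analytic sR hs2 M
  rw [← hB] at hana
  have hnr0 : (0 : ℝ) ≤ (nr S N U : ℝ) := Nat.cast_nonneg _
  have hNB : B + 4 * sR ^ ((5 : ℝ) / 3) ≤ (N : ℝ) := by rw [hB]; linarith
  have hBad4 : (Bad.ncard : ℝ) ≤ 4 * sR ^ ((5 : ℝ) / 3) * nr S N U :=
    hBadcard.trans (mul_le_mul_of_nonneg_right hana hnr0)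
  have hE' : (E.ncard : ℝ) = (N : ℝ) * nr S N U := by exact_mod_cast hcardE
  rw [hcard1, hE']
  have hexp : (B + 4 * sR ^ ((5 : ℝ) / 3)) * (nr S N U : ℝ) ≤ (N : ℝ) * nr S N U :=
    mul_le_mul_of_nonneg_right hNB hnr0
  have hexp2 : B * (nr S N U : ℝ) + 4 * sR ^ ((5 : ℝ) / 3) * (nr S N U : ℝ)
      ≤ (N : ℝ) * nr S N U := by linear_combination hexp
  linarith [hexp2, hBad4]


theorem nr_pos (S : Finset G) (N : ℕ) [NeZero N] (hS : 2 ≤ S.card)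
    (hN : 4 * (S.card : ℝ) ^ 2 + 16 * (S.card : ℝ) ^ ((5 : ℝ) / 3) ≤ N) (U : Finset G) :
    1 ≤ nr S N U := by
  induction U using Finset.induction_on with
  | empty => rw [nr_empty]
  | insert a U' hx ih =>
    have hstep := step_main S N hS hN U'.card U' le_rfl a hx
    have hs2 : (2:ℝ) ≤ (S.card:ℝ) := by exact_mod_cast hS
    have hu0 : (0:ℝ) < (S.card:ℝ)^((5:ℝ)/3) := Real.rpow_pos_of_pos (by linarith) _
    have h1 : (1:ℝ) ≤ (nr S N U' : ℝ) := by exact_mod_cast ih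
    have h2 : (1:ℝ) ≤ (nr S N (insert a U') : ℝ) := le_trans (by nlinarith) hstep
    exact_mod_cast h2

theorem exists_good (S : Finset G) (N : ℕ) [NeZero N] (hS : 2 ≤ S.card)
    (hN : 4 * (S.card : ℝ) ^ 2 + 16 * (S.card : ℝ) ^ ((5 : ℝ) / 3) ≤ N) (U : Finset G) :
    ∃ c : G → Fin N, Good S (· ∈ U) c := by
  have h1 := nr_pos S N hS hN U
  have hne : (NRset S N U).Nonempty := by
    refine Set.nonempty_of_ncard_ne_zero ?_
    have : nr S N U = (NRset S N U).ncard := rfl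
    omega
  obtain ⟨c, hc⟩ := hne
  exact ⟨c, hc.2⟩

end CayleyNR

/-- For any group `G` generated by a finite set `S` (with `|S| ≥ 2`), the undirected right
Cayley graph of `G` admits a nonrepetitive vertex coloring with `4|S|² + 16|S|^{5/3}`
colors: no path `v₁ … v_{2n}` (distinct vertices, consecutive ones adjacent) satisfies
`c(vᵢ) = c(v_{n+i})` for all `i`. -/
theorem cayley_nonrepetitive_coloring {G : Type*} [Group G] (S : Finset G)
    (hgen : Subgroup.closure (S : Set G) = ⊤) (hS : 2 ≤ S.card)
    (N : ℕ) (hN : 4 * (S.card : ℝ) ^ 2 + 16 * (S.card : ℝ) ^ ((5 : ℝ) / 3) ≤ N) :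
    ∃ c : G → Fin N,
      ¬ ∃ (n : ℕ) (v : ℕ → G), 1 ≤ n ∧
        (∀ i j, i < 2 * n → j < 2 * n → i ≠ j → v i ≠ v j) ∧
        (∀ i, i + 1 < 2 * n → ∃ t ∈ S, v i * t = v (i + 1) ∨ v (i + 1) * t = v i) ∧
        (∀ i < n, c (v i) = c (v (n + i))) := by
  classical
  have hs2 : (2:ℝ) ≤ (S.card:ℝ) := by exact_mod_cast hS
  have hpos : (0:ℝ) < 4 * (S.card : ℝ) ^ 2 + 16 * (S.card : ℝ) ^ ((5 : ℝ) / 3) := by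
    have := Real.rpow_nonneg (by positivity : (0:ℝ) ≤ (S.card:ℝ)) ((5:ℝ)/3)
    nlinarith
  have hNpos : 0 < N := by exact_mod_cast lt_of_lt_of_le hpos hN
  haveI : NeZero N := ⟨hNpos.ne'⟩
  have hex : ∀ U : Finset G, ∃ c : G → Fin N, CayleyNR.Good S (· ∈ U) c :=
    CayleyNR.exists_good S N hS hN
  choose cU hcU using hex
  haveI : Nonempty (Finset G) := ⟨∅⟩
  haveI hNB : (Filter.atTop : Filter (Finset G)).NeBot := Filter.atTop_neBot
  set 𝒰 : Ultrafilter (Finset G) := Ultrafilter.of Filter.atTop with h𝒰def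
  have h𝒰 : (𝒰 : Filter (Finset G)) ≤ Filter.atTop := Ultrafilter.of_le _
  have hlim : ∀ g : G, ∃ a : Fin N, ∀ᶠ U in (𝒰 : Filter (Finset G)), cU U g = a := by
    intro g
    by_contra h
    push_neg at h
    have h2 : ∀ a : Fin N, ∀ᶠ U in (𝒰 : Filter (Finset G)), cU U g ≠ a := by
      intro a
      exact h a
    have h3 : ∀ᶠ U in (𝒰 : Filter (Finset G)), ∀ a : Fin N, cU U g ≠ a :=
      Filter.eventually_all.2 h2
    obtain ⟨U, hU⟩ := h3.exists
    exact hU (cU U g) rfl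
  choose c hc using hlim
  refine ⟨c, ?_⟩
  rintro ⟨n, v, hn, hdist, hadj, hrep⟩
  have hmemev : ∀ᶠ U in (𝒰 : Filter (Finset G)),
      (Finset.range (2*n)).image v ⊆ U := h𝒰 (Filter.mem_atTop _)
  have hagree : ∀ᶠ U in (𝒰 : Filter (Finset G)),
      ∀ i ∈ Finset.range (2*n), cU U (v i) = c (v i) := by
    rw [Filter.eventually_all_finset]
    intro i _
    exact hc (v i)
  obtain ⟨U, hUV, hUagree⟩ := (hmemev.and hagree).exists
  refine hcU U ⟨n, v, hn, ?_, hdist, hadj, ?_⟩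
  · intro i hi
    exact hUV (Finset.mem_image.2 ⟨i, Finset.mem_range.2 hi, rfl⟩)
  · intro i hi
    have h1 : cU U (v i) = c (v i) := hUagree i (Finset.mem_range.2 (by omega))
    have h2 : cU U (v (n+i)) = c (v (n+i)) := hUagree (n+i) (Finset.mem_range.2 (by omega))
    rw [h1, h2]
    exact hrep i hi
end
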